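/- arXiv:0709.2600 — 5 statements merged into one kernel-verified Lean document; each statement's English description precedes it below -/
import Mathlib

section
/- Suppose that for μ-almost all t ∈ M, the semigroup (θ_k) is weakly mixing along the sequence (κ_n(t))_{n∈ℕ}, i.e. (1/n)Σ_{i=0}^{n-1} |P(A ∩ θ_{κ_i(t)}^{-1}B) − P(A)P(B)| → 0 for all A, B ∈ 𝓕. If τ is ergodic with respect to μ, then the skew product S is ergodic with respect to μ ⊗ P. -/
open MeasureTheory Filter Finset

/-- under condition (C1), if `τ` is ergodic then the skew product `S` is
ergodic with respect to `μ ⊗ P`. -/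
theorem skew_product_ergodic
    {M Ω : Type*} [MeasurableSpace M] [MeasurableSpace Ω] {d : ℕ}
    (μ : Measure M) (P : Measure Ω) [IsProbabilityMeasure μ] [IsProbabilityMeasure P]
    (θ : (Fin d → ℕ) → Ω → Ω)
    (hθ0 : θ 0 = id)
    (hθadd : ∀ k l : Fin d → ℕ, θ k ∘ θ l = θ (k + l))
    (hθmeas : ∀ k, Measurable (θ k))
    (hθmp : ∀ k, MeasurePreserving (θ k) P P)
    (τ : M → M) (hτ : MeasurePreserving τ μ μ)
    (κ : M → Fin d → ℕ) (hκ : Measurable κ)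
    -- condition (C1): for μ-a.e. t, `(θ_k)` is weakly mixing along the sequence `κ_n(t)`
    (hC1 : ∀ᵐ t ∂μ, ∀ A B : Set Ω, MeasurableSet A → MeasurableSet B →
      Tendsto (fun n : ℕ => (n : ℝ)⁻¹ * ∑ i ∈ Finset.range n,
          |(P (A ∩ θ (∑ j ∈ Finset.range i, κ (τ^[j] t)) ⁻¹' B)).toReal
            - (P A).toReal * (P B).toReal|) atTop (nhds 0))
    (hergτ : Ergodic τ μ) :
    Ergodic (fun p : M × Ω => (τ p.1, θ (κ p.1) p.2)) (μ.prod P) := by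
  -- measurability of the uncurried fiber map
  have hum : Measurable (Function.uncurry fun t => θ (κ t)) := by
    have h1 : Measurable fun q : Ω × (Fin d → ℕ) => θ q.2 q.1 :=
      measurable_from_prod_countable_left fun k => hθmeas k
    exact h1.comp (measurable_snd.prodMk (hκ.comp measurable_fst))
  have hmp : MeasurePreserving (fun p : M × Ω => (τ p.1, θ (κ p.1) p.2)) (μ.prod P) (μ.prod P) :=
    MeasurePreserving.skew_product hτ hum
      (Filter.Eventually.of_forall fun t => (hθmp (κ t)).map_eq)
  refine ⟨hmp, ⟨fun E hE hEinv => ?_⟩⟩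
  -- fiber invariance
  have hfiber : ∀ t, θ (κ t) ⁻¹' (Prod.mk (τ t) ⁻¹' E) = Prod.mk t ⁻¹' E := by
    intro t
    ext ω
    simpa using Set.ext_iff.mp hEinv (t, ω)
  have hfiberIter : ∀ (t : M) (i : ℕ),
      θ (∑ j ∈ Finset.range i, κ (τ^[j] t)) ⁻¹' (Prod.mk (τ^[i] t) ⁻¹' E)
        = Prod.mk t ⁻¹' E := by
    intro t i
    induction i with
    | zero => simp [hθ0]
    | succ i ih =>
      rw [Finset.sum_range_succ, Function.iterate_succ_apply']
      have hcomp : θ (∑ j ∈ Finset.range i, κ (τ^[j] t) + κ (τ^[i] t))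
          = θ (κ (τ^[i] t)) ∘ θ (∑ j ∈ Finset.range i, κ (τ^[j] t)) := by
        rw [hθadd, add_comm]
      rw [hcomp, Set.preimage_comp, hfiber (τ^[i] t), ih]
  -- the fiber measure is τ-invariant, hence a.e. constant
  have hEt : ∀ t : M, MeasurableSet (Prod.mk t ⁻¹' E) := fun t => measurable_prodMk_left hE
  have hG : Measurable fun t => P (Prod.mk t ⁻¹' E) := measurable_measure_prodMk_left hE
  have hGinv : (fun t => P (Prod.mk t ⁻¹' E)) ∘ τ = fun t => P (Prod.mk t ⁻¹' E) := by
    funext t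
    simp only [Function.comp_apply]
    rw [← hfiber t, (hθmp (κ t)).measure_preimage (hEt (τ t)).nullMeasurableSet]
  obtain ⟨cE, hcE⟩ : ∃ c, (fun t => P (Prod.mk t ⁻¹' E)) =ᵐ[μ] Function.const M c :=
    hergτ.ae_eq_const_of_ae_eq_comp₀ hG.nullMeasurable (by rw [hGinv])
  have hcle : cE ≤ 1 := by
    obtain ⟨t, ht⟩ := hcE.exists
    calc cE = P (Prod.mk t ⁻¹' E) := ht.symm
    _ ≤ 1 := prob_le_one
  have hcnt : cE ≠ ⊤ := (lt_of_le_of_lt hcle ENNReal.one_lt_top).ne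
  -- μ.prod P E = cE
  have hEc : (μ.prod P) E = cE := by
    rw [Measure.prod_apply hE, lintegral_congr_ae hcE]
    simp
  -- key: for every measurable B, a.e. t, P(E_t ∩ B) = cE * P B
  have hkey : ∀ B : Set Ω, MeasurableSet B →
      ∀ᵐ t ∂μ, P (Prod.mk t ⁻¹' E ∩ B) = cE * P B := by
    intro B hB
    -- the fiber intersection function
    set ψ : M → ENNReal := fun t => P (Prod.mk t ⁻¹' E ∩ B) with hψ
    have hψeq : ∀ t, Prod.mk t ⁻¹' E ∩ B = Prod.mk t ⁻¹' (E ∩ Set.univ ×ˢ B) := by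
      intro t
      rw [Set.preimage_inter, Set.mk_preimage_prod_right (Set.mem_univ t)]
    have hψm : Measurable ψ := by
      have hmm : Measurable fun t => P (Prod.mk t ⁻¹' (E ∩ Set.univ ×ˢ B)) :=
        measurable_measure_prodMk_left (hE.inter (MeasurableSet.univ.prod hB))
      have hfun : ψ = fun t => P (Prod.mk t ⁻¹' (E ∩ Set.univ ×ˢ B)) :=
        funext fun t => by simp only [hψ]; rw [hψeq t]
      rw [hfun]
      exact hmm
    set φ : M → ℝ := fun t => |(ψ t).toReal - cE.toReal * (P B).toReal| with hφ
    have hφm : Measurable φ := (hψm.ennreal_toReal.sub measurable_const).abs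
    have htr1 : ∀ s : Set Ω, (P s).toReal ≤ 1 := by
      intro s
      simpa using ENNReal.toReal_mono ENNReal.one_ne_top prob_le_one
    have hctr : cE.toReal ≤ 1 := by simpa using ENNReal.toReal_mono ENNReal.one_ne_top hcle
    have hφ0 : ∀ t, 0 ≤ φ t := fun t => abs_nonneg _
    have hφ2 : ∀ t, φ t ≤ 2 := by
      intro t
      have h1 : (ψ t).toReal ≤ 1 := htr1 _
      have h2 : 0 ≤ (ψ t).toReal := ENNReal.toReal_nonneg
      have h3 : 0 ≤ cE.toReal := ENNReal.toReal_nonneg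
      have h4 : 0 ≤ (P B).toReal := ENNReal.toReal_nonneg
      have h5 : (P B).toReal ≤ 1 := htr1 _
      rw [hφ, abs_sub_le_iff]
      constructor <;> nlinarith
    -- a.e. convergence of the averages of φ along the orbit
    have hae : ∀ᵐ t ∂μ, Tendsto (fun n : ℕ => (n : ℝ)⁻¹ * ∑ i ∈ Finset.range n,
        φ (τ^[i] t)) atTop (nhds 0) := by
      filter_upwards [hC1, hcE] with t ht hct
      have h1 := ht (Prod.mk t ⁻¹' E) B (hEt t) hB
      refine h1.congr fun n => ?_
      congr 1
      refine Finset.sum_congr rfl fun i _ => ?_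
      have hint : Prod.mk t ⁻¹' E ∩ θ (∑ j ∈ Finset.range i, κ (τ^[j] t)) ⁻¹' B
          = θ (∑ j ∈ Finset.range i, κ (τ^[j] t)) ⁻¹' (Prod.mk (τ^[i] t) ⁻¹' E ∩ B) := by
        rw [Set.preimage_inter, hfiberIter t i]
      have hPeq : P (Prod.mk t ⁻¹' E ∩ θ (∑ j ∈ Finset.range i, κ (τ^[j] t)) ⁻¹' B)
          = ψ (τ^[i] t) := by
        rw [hint, (hθmp _).measure_preimage ((hEt _).inter hB).nullMeasurableSet]
      rw [hPeq, hct]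
      rfl
    -- the integral of each average equals the integral of φ
    have hIit : ∀ i : ℕ, ∫ t, φ (τ^[i] t) ∂μ = ∫ t, φ t ∂μ := by
      intro i
      have hmap := (hτ.iterate i).map_eq
      rw [← integral_map (hτ.iterate i).measurable.aemeasurable
        (by rw [hmap]; exact hφm.aestronglyMeasurable), hmap]
    have hFm : ∀ n : ℕ, AEStronglyMeasurable
        (fun t => (n : ℝ)⁻¹ * ∑ i ∈ Finset.range n, φ (τ^[i] t)) μ := by
      intro n
      exact ((Finset.measurable_sum (Finset.range n)
        (fun i _ => hφm.comp (hτ.iterate i).measurable)).const_mul _).aestronglyMeasurable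
    have hbound : ∀ n : ℕ, ∀ᵐ t ∂μ,
        ‖(n : ℝ)⁻¹ * ∑ i ∈ Finset.range n, φ (τ^[i] t)‖ ≤ (2 : ℝ) := by
      intro n
      refine Filter.Eventually.of_forall fun t => ?_
      have hs0 : 0 ≤ ∑ i ∈ Finset.range n, φ (τ^[i] t) :=
        Finset.sum_nonneg fun i _ => hφ0 _
      have hsle : ∑ i ∈ Finset.range n, φ (τ^[i] t) ≤ (n : ℝ) * 2 := by
        calc ∑ i ∈ Finset.range n, φ (τ^[i] t) ≤ (Finset.range n).card • (2 : ℝ) :=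
              Finset.sum_le_card_nsmul _ _ _ fun i _ => hφ2 _
          _ = (n : ℝ) * 2 := by simp [nsmul_eq_mul]
      rw [Real.norm_eq_abs, abs_of_nonneg (by positivity)]
      rcases Nat.eq_zero_or_pos n with hn | hn
      · simp [hn]
      · have hnne : (n : ℝ) ≠ 0 := Nat.cast_ne_zero.mpr hn.ne'
        calc (n : ℝ)⁻¹ * ∑ i ∈ Finset.range n, φ (τ^[i] t)
            ≤ (n : ℝ)⁻¹ * ((n : ℝ) * 2) := by
              exact mul_le_mul_of_nonneg_left hsle (by positivity)
          _ = 2 := by field_simp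
    -- dominated convergence
    have hdct := tendsto_integral_of_dominated_convergence (fun _ : M => (2 : ℝ))
      hFm (integrable_const 2) hbound hae
    have hIn : ∀ n : ℕ, ∫ t, (n : ℝ)⁻¹ * ∑ i ∈ Finset.range n, φ (τ^[i] t) ∂μ
        = (n : ℝ)⁻¹ * ((n : ℝ) * ∫ t, φ t ∂μ) := by
      intro n
      rw [integral_const_mul, integral_finset_sum]
      · congr 1
        rw [Finset.sum_congr rfl fun i _ => hIit i, Finset.sum_const, Finset.card_range,
          nsmul_eq_mul]
      · intro i _
        refine ⟨(hφm.comp (hτ.iterate i).measurable).aestronglyMeasurable, ?_⟩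
        refine HasFiniteIntegral.of_bounded (C := 2) (Filter.Eventually.of_forall fun t => ?_)
        rw [Real.norm_eq_abs, abs_of_nonneg (hφ0 _)]
        exact hφ2 _
    have hI0 : ∫ t, φ t ∂μ = 0 := by
      have hev : (fun n : ℕ => ∫ t, (n : ℝ)⁻¹ * ∑ i ∈ Finset.range n, φ (τ^[i] t) ∂μ)
          =ᶠ[atTop] fun _ => ∫ t, φ t ∂μ := by
        filter_upwards [eventually_ge_atTop 1] with n hn
        have hnne : (n : ℝ) ≠ 0 := Nat.cast_ne_zero.mpr (by omega)
        rw [hIn n, ← mul_assoc, inv_mul_cancel₀ hnne, one_mul]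
      simp only [integral_zero] at hdct
      have h2 : Tendsto (fun _ : ℕ => ∫ t, φ t ∂μ) atTop (nhds 0) := hdct.congr' hev
      exact (tendsto_nhds_unique h2 tendsto_const_nhds).symm
    -- φ is integrable and nonnegative with zero integral, hence a.e. zero
    have hφint : Integrable φ μ := by
      refine ⟨hφm.aestronglyMeasurable, ?_⟩
      refine HasFiniteIntegral.of_bounded (C := 2) (Filter.Eventually.of_forall fun t => ?_)
      rw [Real.norm_eq_abs, abs_of_nonneg (hφ0 _)]
      exact hφ2 _
    have hφ0ae : φ =ᵐ[μ] 0 := by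
      rw [← integral_eq_zero_iff_of_nonneg (fun t => hφ0 t) hφint] at *
      exact hI0
    filter_upwards [hφ0ae] with t ht
    have hval : (ψ t).toReal = cE.toReal * (P B).toReal := by
      have : |(ψ t).toReal - cE.toReal * (P B).toReal| = 0 := ht
      have := abs_eq_zero.mp this
      linarith
    have hfin1 : ψ t ≠ ⊤ := measure_ne_top _ _
    have hfin2 : cE * P B ≠ ⊤ := ENNReal.mul_ne_top hcnt (measure_ne_top _ _)
    rw [← ENNReal.toReal_eq_toReal_iff' hfin1 hfin2, ENNReal.toReal_mul]
    exact hval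
  -- rectangles
  have hrect : ∀ A : Set M, ∀ B : Set Ω, MeasurableSet A → MeasurableSet B →
      (μ.prod P) (A ×ˢ B ∩ E) = cE * (μ.prod P) (A ×ˢ B) := by
    intro A B hA hB
    classical
    rw [Measure.prod_apply ((hA.prod hB).inter hE), Measure.prod_prod]
    have hpt : ∀ t, P (Prod.mk t ⁻¹' (A ×ˢ B ∩ E))
        = Set.indicator A (fun t => P (Prod.mk t ⁻¹' E ∩ B)) t := by
      intro t
      rw [Set.preimage_inter, Set.mk_preimage_prod_right_eq_if]
      by_cases ht : t ∈ A
      · simp [ht, Set.inter_comm]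
      · simp [ht]
    calc ∫⁻ t, P (Prod.mk t ⁻¹' (A ×ˢ B ∩ E)) ∂μ
        = ∫⁻ t, Set.indicator A (fun t => P (Prod.mk t ⁻¹' E ∩ B)) t ∂μ :=
          lintegral_congr hpt
      _ = ∫⁻ t in A, P (Prod.mk t ⁻¹' E ∩ B) ∂μ := lintegral_indicator hA _
      _ = ∫⁻ _ in A, cE * P B ∂μ :=
          lintegral_congr_ae (ae_restrict_of_ae (hkey B hB))
      _ = cE * P B * μ A := setLIntegral_const A _
      _ = cE * (μ A * P B) := by ring
  -- conclude restrict = smul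
  have hres : (μ.prod P).restrict E = cE • (μ.prod P) := by
    have hfin : IsFiniteMeasure (cE • (μ.prod P)) := by
      constructor
      rw [Measure.smul_apply, smul_eq_mul, measure_univ, mul_one]
      exact lt_of_le_of_lt hcle ENNReal.one_lt_top
    refine ext_of_generate_finite _ generateFrom_prod.symm isPiSystem_prod ?_ ?_
    · rintro s ⟨A, hA, B, hB, rfl⟩
      rw [Measure.restrict_apply ((hA : MeasurableSet A).prod hB), Measure.smul_apply,
        smul_eq_mul]
      exact hrect A B hA hB
    · rw [Measure.restrict_apply MeasurableSet.univ, Set.univ_inter, hEc, Measure.smul_apply,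
        smul_eq_mul, measure_univ, mul_one]
  -- cE = cE * cE
  have hsq : cE = cE * cE := by
    have := congrArg (fun ν : Measure (M × Ω) => ν E) hres
    simpa [Measure.restrict_apply hE, hEc] using this
  rw [Filter.eventuallyConst_set']
  rcases eq_or_ne cE 0 with h0 | h0
  · left
    rw [MeasureTheory.ae_eq_empty, hEc, h0]
  · right
    have h1 : cE = 1 := by
      have hr : cE.toReal = cE.toReal * cE.toReal := by
        rw [← ENNReal.toReal_mul, ← hsq]
      have hr0 : cE.toReal ≠ 0 := ENNReal.toReal_ne_zero.mpr ⟨h0, hcnt⟩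
      have : cE.toReal = 1 := by
        have := mul_left_cancel₀ hr0 (by rw [mul_one, ← hr] : cE.toReal * 1 = cE.toReal * cE.toReal)
        linarith
      rwa [ENNReal.toReal_eq_one_iff] at this
    rw [MeasureTheory.ae_eq_univ, measure_compl hE (by simp), hEc, h1, measure_univ, tsub_self]
end

section
/- Assume (θ_k) is strongly mixing (P(A ∩ θ_k^{-1}B) → P(A)P(B) as ‖k‖→∞) and that ‖κ_n(t)‖ → ∞ for μ-almost every t. If τ is strongly mixing with respect to μ, then S is strongly mixing with respect to μ ⊗ P. -/
open MeasureTheory Filter Finset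

section Aux

variable {M Ω : Type*} [MeasurableSpace M] [MeasurableSpace Ω] {d : ℕ}

/-- Iterates of the skew product. -/
lemma skew_iter (θ : (Fin d → ℕ) → Ω → Ω) (hθ0 : θ 0 = id)
    (hθadd : ∀ k l : Fin d → ℕ, θ k ∘ θ l = θ (k + l))
    (τ : M → M) (κ : M → Fin d → ℕ) (n : ℕ) (p : M × Ω) :
    (fun p : M × Ω => (τ p.1, θ (κ p.1) p.2))^[n] p
      = (τ^[n] p.1, θ (∑ j ∈ Finset.range n, κ (τ^[j] p.1)) p.2) := by
  induction n with
  | zero => simp [hθ0]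
  | succ n ih =>
      rw [Function.iterate_succ_apply', ih]
      have h1 : θ (κ (τ^[n] p.1)) (θ (∑ j ∈ Finset.range n, κ (τ^[j] p.1)) p.2)
          = θ (κ (τ^[n] p.1) + ∑ j ∈ Finset.range n, κ (τ^[j] p.1)) p.2 :=
        congrFun (hθadd _ _) p.2
      simp only [Function.iterate_succ_apply']
      refine Prod.ext rfl ?_
      simp only [h1, Finset.sum_range_succ]
      congr 1
      exact add_comm _ _

end Aux

/-- A measure-preserving map is strongly mixing if correlations decay. -/
def StronglyMixingMap {α : Type*} [MeasurableSpace α] (f : α → α) (m : Measure α) : Prop :=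
  ∀ A B : Set α, MeasurableSet A → MeasurableSet B →
    Tendsto (fun n : ℕ => (m (A ∩ f^[n] ⁻¹' B)).toReal) atTop
      (nhds ((m A).toReal * (m B).toReal))

/-- if the semigroup `(θ_k)` is strongly mixing (correlations decay as
`‖k‖ → ∞`, i.e. along the cofinite filter on `ℕ^d`), `‖κ_n(t)‖ → ∞` for μ-a.e. `t`,
and `τ` is strongly mixing, then the skew product `S` is strongly mixing w.r.t. `μ ⊗ P`. -/
theorem skew_product_stronglyMixing
    {M Ω : Type*} [MeasurableSpace M] [MeasurableSpace Ω] {d : ℕ}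
    (μ : Measure M) (P : Measure Ω) [IsProbabilityMeasure μ] [IsProbabilityMeasure P]
    (θ : (Fin d → ℕ) → Ω → Ω)
    (hθ0 : θ 0 = id)
    (hθadd : ∀ k l : Fin d → ℕ, θ k ∘ θ l = θ (k + l))
    (hθmeas : ∀ k, Measurable (θ k))
    (hθmp : ∀ k, MeasurePreserving (θ k) P P)
    -- `(θ_k)` is strongly mixing: correlations decay as `‖k‖ → ∞`
    (hθmix : ∀ A B : Set Ω, MeasurableSet A → MeasurableSet B →
      Tendsto (fun k : Fin d → ℕ => (P (A ∩ θ k ⁻¹' B)).toReal) cofinite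
        (nhds ((P A).toReal * (P B).toReal)))
    (τ : M → M) (hτ : MeasurePreserving τ μ μ)
    (κ : M → Fin d → ℕ) (hκ : Measurable κ)
    -- `‖κ_n(t)‖ → ∞` for μ-a.e. t
    (hκinf : ∀ᵐ t ∂μ, Tendsto (fun n : ℕ => ∑ j ∈ Finset.range n, κ (τ^[j] t)) atTop cofinite)
    (hsmτ : StronglyMixingMap τ μ) :
    StronglyMixingMap (fun p : M × Ω => (τ p.1, θ (κ p.1) p.2)) (μ.prod P) := by
  classical
  set S : M × Ω → M × Ω := fun p => (τ p.1, θ (κ p.1) p.2) with hSdef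
  set ν : Measure (M × Ω) := μ.prod P with hνdef
  -- measurability of the fibre map
  have hF : Measurable (fun q : (Fin d → ℕ) × Ω => θ q.1 q.2) := by
    have : Measurable (fun q : Ω × (Fin d → ℕ) => θ q.2 q.1) :=
      measurable_from_prod_countable_left fun k => hθmeas k
    exact this.comp measurable_swap
  have hgm : Measurable (Function.uncurry fun t => θ (κ t)) := by
    have : Measurable (fun p : M × Ω => ((κ p.1, p.2) : (Fin d → ℕ) × Ω)) :=
      (hκ.comp measurable_fst).prodMk measurable_snd
    exact hF.comp this
  have hSmp : MeasurePreserving S ν ν :=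
    hτ.skew_product hgm (Eventually.of_forall fun t => (hθmp (κ t)).map_eq)
  have hSmeas : Measurable S := hSmp.measurable
  haveI : IsProbabilityMeasure ν := by infer_instance
  -- κ_n is measurable
  haveI : MeasurableAdd₂ (Fin d → ℕ) := ⟨measurable_of_countable _⟩
  have hκn : ∀ n : ℕ, Measurable (fun t => ∑ j ∈ Finset.range n, κ (τ^[j] t)) := by
    intro n
    induction n with
    | zero => simpa using measurable_const
    | succ n ih =>
        simpa [Finset.sum_range_succ, Pi.add_def, Function.comp_def] using ih.add (hκ.comp (hτ.measurable.iterate n))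
  have hiter : ∀ (n : ℕ) (p : M × Ω),
      S^[n] p = (τ^[n] p.1, θ (∑ j ∈ Finset.range n, κ (τ^[j] p.1)) p.2) :=
    skew_iter θ hθ0 hθadd τ κ
    -- ====== Rectangle case ======
  have hPle1 : ∀ s : Set Ω, (P s).toReal ≤ 1 := fun s => by
    simpa using ENNReal.toReal_mono ENNReal.one_ne_top prob_le_one
  have hrect : ∀ (A₁ B₁ : Set M) (A₂ B₂ : Set Ω), MeasurableSet A₁ → MeasurableSet B₁ →
      MeasurableSet A₂ → MeasurableSet B₂ →
      Tendsto (fun n : ℕ => (ν ((A₁ ×ˢ A₂) ∩ S^[n] ⁻¹' (B₁ ×ˢ B₂))).toReal) atTop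
        (nhds ((ν (A₁ ×ˢ A₂)).toReal * (ν (B₁ ×ˢ B₂)).toReal)) := by
    intro A₁ B₁ A₂ B₂ hA₁ hB₁ hA₂ hB₂
    set c : ℝ := (P A₂).toReal * (P B₂).toReal with hc
    have hc0 : 0 ≤ c := mul_nonneg ENNReal.toReal_nonneg ENNReal.toReal_nonneg
    have hc1 : c ≤ 1 := mul_le_one₀ (hPle1 _) ENNReal.toReal_nonneg (hPle1 _)
    set g : ℕ → M → ℝ :=
      fun n t => (P (A₂ ∩ θ (∑ j ∈ Finset.range n, κ (τ^[j] t)) ⁻¹' B₂)).toReal with hgdef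
    set D : ℕ → Set M := fun n => A₁ ∩ τ^[n] ⁻¹' B₁ with hDdef
    have hDmeas : ∀ n, MeasurableSet (D n) :=
      fun n => hA₁.inter ((hτ.measurable.iterate n) hB₁)
    have hgmeas : ∀ n, Measurable (g n) := fun n =>
      (measurable_of_countable (fun k => (P (A₂ ∩ θ k ⁻¹' B₂)).toReal)).comp (hκn n)
    have hg0 : ∀ n t, 0 ≤ g n t := fun n t => ENNReal.toReal_nonneg
    have hg1 : ∀ n t, g n t ≤ 1 := fun n t => hPle1 _
    -- the key integral formula
    have hkey : ∀ n : ℕ, (ν ((A₁ ×ˢ A₂) ∩ S^[n] ⁻¹' (B₁ ×ˢ B₂))).toReal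
        = ∫ t, Set.indicator (D n) (g n) t ∂μ := by
      intro n
      have hmeasset : MeasurableSet ((A₁ ×ˢ A₂) ∩ S^[n] ⁻¹' (B₁ ×ˢ B₂)) :=
        (hA₁.prod hA₂).inter ((hSmeas.iterate n) (hB₁.prod hB₂))
      have hslice : ∀ t : M, P (Prod.mk t ⁻¹' ((A₁ ×ˢ A₂) ∩ S^[n] ⁻¹' (B₁ ×ˢ B₂)))
          = Set.indicator (D n)
              (fun t => P (A₂ ∩ θ (∑ j ∈ Finset.range n, κ (τ^[j] t)) ⁻¹' B₂)) t := by
        intro t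
        by_cases ht : t ∈ D n
        · have ht1 : t ∈ A₁ := ht.1
          have ht2 : t ∈ τ^[n] ⁻¹' B₁ := ht.2
          rw [Set.indicator_of_mem ht]
          congr 1
          ext ω
          simp only [Set.mem_preimage, Set.mem_inter_iff, hiter n (t, ω), Set.mem_prod]
          exact ⟨fun h => ⟨h.1.2, h.2.2⟩, fun h => ⟨⟨ht1, h.1⟩, ⟨ht2, h.2⟩⟩⟩
        · rw [Set.indicator_of_notMem ht]
          have : Prod.mk t ⁻¹' ((A₁ ×ˢ A₂) ∩ S^[n] ⁻¹' (B₁ ×ˢ B₂)) = ∅ := by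
            ext ω
            simp only [Set.mem_preimage, Set.mem_inter_iff, hiter n (t, ω), Set.mem_prod,
              Set.mem_empty_iff_false, iff_false]
            intro h
            exact ht ⟨h.1.1, h.2.1⟩
          rw [this, measure_empty]
      have hFm : Measurable (fun t =>
          Set.indicator (D n)
            (fun t => P (A₂ ∩ θ (∑ j ∈ Finset.range n, κ (τ^[j] t)) ⁻¹' B₂)) t) :=
        Measurable.indicator
          ((measurable_of_countable (fun k => P (A₂ ∩ θ k ⁻¹' B₂))).comp (hκn n)) (hDmeas n)
      have hFfin : ∀ᵐ t ∂μ, Set.indicator (D n)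
          (fun t => P (A₂ ∩ θ (∑ j ∈ Finset.range n, κ (τ^[j] t)) ⁻¹' B₂)) t < ⊤ := by
        refine Eventually.of_forall fun t => ?_
        by_cases ht : t ∈ D n
        · rw [Set.indicator_of_mem ht]; exact measure_lt_top _ _
        · rw [Set.indicator_of_notMem ht]; exact ENNReal.zero_lt_top
      rw [hνdef, Measure.prod_apply hmeasset, lintegral_congr hslice,
        ← integral_toReal hFm.aemeasurable hFfin]
      refine integral_congr_ae (Eventually.of_forall fun t => ?_)
      by_cases ht : t ∈ D n
      · simp [Set.indicator_of_mem ht, hgdef]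
      · simp [Set.indicator_of_notMem ht]
    -- integrability facts
    have hInd : ∀ n, Integrable (Set.indicator (D n) (g n)) μ := by
      intro n
      refine (integrable_const (1 : ℝ)).mono'
        ((hgmeas n).indicator (hDmeas n)).aestronglyMeasurable
        (Eventually.of_forall fun t => ?_)
      by_cases ht : t ∈ D n
      · rw [Set.indicator_of_mem ht, Real.norm_eq_abs, abs_of_nonneg (hg0 n t)]
        exact hg1 n t
      · simp [Set.indicator_of_notMem ht]
    have hIndc : ∀ n, Integrable (Set.indicator (D n) (fun _ => c)) μ :=
      fun n => (integrable_const c).indicator (hDmeas n)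
    have hwInt : ∀ n, Integrable (Set.indicator (D n) (fun x => g n x - c)) μ := by
      intro n
      refine ((hInd n).sub (hIndc n)).congr (Eventually.of_forall fun t => ?_)
      by_cases ht : t ∈ D n <;> simp [Set.indicator_of_mem, Set.indicator_of_notMem, ht]
    have hvInt : ∀ n, Integrable (Set.indicator A₁ (fun x => |g n x - c|)) μ := by
      intro n
      refine (integrable_const (2 : ℝ)).mono'
        (((hgmeas n).sub measurable_const).abs.indicator hA₁).aestronglyMeasurable
        (Eventually.of_forall fun t => ?_)
      by_cases ht : t ∈ A₁
      · rw [Set.indicator_of_mem ht, Real.norm_eq_abs, abs_abs]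
        have h1 := hg0 n t; have h2 := hg1 n t
        rw [abs_le]; exact ⟨by linarith, by linarith⟩
      · simp only [Set.indicator_of_notMem ht, norm_zero]; norm_num
    -- splitting the integral
    have heq : ∀ n : ℕ, (ν ((A₁ ×ˢ A₂) ∩ S^[n] ⁻¹' (B₁ ×ˢ B₂))).toReal
        = (∫ t, Set.indicator (D n) (fun x => g n x - c) t ∂μ)
          + (μ (A₁ ∩ τ^[n] ⁻¹' B₁)).toReal * c := by
      intro n
      rw [hkey n]
      have hsplit : ∀ t, Set.indicator (D n) (g n) t
          = Set.indicator (D n) (fun x => g n x - c) t + Set.indicator (D n) (fun _ => c) t := by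
        intro t
        by_cases ht : t ∈ D n <;>
          simp [Set.indicator_of_mem, Set.indicator_of_notMem, ht]
      rw [integral_congr_ae (Eventually.of_forall hsplit),
        integral_add (hwInt n) (hIndc n), integral_indicator_const c (hDmeas n),
        smul_eq_mul, measureReal_def]
    -- convergence of the error term to 0
    have hv0 : Tendsto (fun n => ∫ t, Set.indicator A₁ (fun x => |g n x - c|) t ∂μ)
        atTop (nhds 0) := by
      have h0 : (0 : ℝ) = ∫ _t, (0 : ℝ) ∂μ := by simp
      rw [h0]
      refine tendsto_integral_of_dominated_convergence (bound := fun _ => (2 : ℝ))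
        (fun n => (((hgmeas n).sub measurable_const).abs.indicator hA₁).aestronglyMeasurable)
        (integrable_const 2) (fun n => Eventually.of_forall fun t => ?_) ?_
      · by_cases ht : t ∈ A₁
        · have h1 := hg0 n t; have h2 := hg1 n t
          have h3 : |g n t - c| ≤ 2 := by rw [abs_le]; exact ⟨by linarith, by linarith⟩
          simpa [Set.indicator_of_mem ht, Real.norm_eq_abs, abs_abs] using h3
        · simp only [Set.indicator_of_notMem ht, norm_zero]; norm_num
      · filter_upwards [hκinf] with t ht
        have hgt : Tendsto (fun n => g n t) atTop (nhds c) :=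
          (hθmix A₂ B₂ hA₂ hB₂).comp ht
        have habs : Tendsto (fun n => |g n t - c|) atTop (nhds 0) := by
          have := (hgt.sub (tendsto_const_nhds (x := c))).abs
          simpa using this
        by_cases ht1 : t ∈ A₁
        · simpa [Set.indicator_of_mem ht1] using habs
        · simpa [Set.indicator_of_notMem ht1] using tendsto_const_nhds
    have hw0 : Tendsto (fun n => ∫ t, Set.indicator (D n) (fun x => g n x - c) t ∂μ)
        atTop (nhds 0) := by
      refine squeeze_zero_norm (fun n => ?_) hv0
      calc ‖∫ t, Set.indicator (D n) (fun x => g n x - c) t ∂μ‖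
          ≤ ∫ t, ‖Set.indicator (D n) (fun x => g n x - c) t‖ ∂μ :=
            norm_integral_le_integral_norm _
        _ ≤ ∫ t, Set.indicator A₁ (fun x => |g n x - c|) t ∂μ := by
            refine integral_mono (hwInt n).norm (hvInt n) fun t => ?_
            by_cases ht : t ∈ D n
            · rw [Set.indicator_of_mem ht, Set.indicator_of_mem ht.1, Real.norm_eq_abs]
            · rw [Set.indicator_of_notMem ht, norm_zero]
              exact Set.indicator_nonneg (fun x _ => abs_nonneg _) t
    -- assemble
    have hfinal := hw0.add ((hsmτ A₁ B₁ hA₁ hB₁).mul_const c)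
    rw [zero_add] at hfinal
    have hlimeq : (μ A₁).toReal * (μ B₁).toReal * c
        = (ν (A₁ ×ˢ A₂)).toReal * (ν (B₁ ×ˢ B₂)).toReal := by
      rw [hνdef, Measure.prod_prod, Measure.prod_prod, ENNReal.toReal_mul, ENNReal.toReal_mul]
      ring
    rw [hlimeq] at hfinal
    exact hfinal.congr fun n => (heq n).symm
    -- ====== Extension in the first argument (B a rectangle) ======
  have hcomplReal : ∀ C : Set (M × Ω), MeasurableSet C → (ν Cᶜ).toReal = 1 - (ν C).toReal := by
    intro C hC
    rw [measure_compl hC (measure_ne_top _ _), measure_univ,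
      ENNReal.toReal_sub_of_le prob_le_one ENNReal.one_ne_top, ENNReal.toReal_one]
  have hstepA : ∀ (B₁ : Set M) (B₂ : Set Ω), MeasurableSet B₁ → MeasurableSet B₂ →
      ∀ A : Set (M × Ω), MeasurableSet A →
      Tendsto (fun n : ℕ => (ν (A ∩ S^[n] ⁻¹' (B₁ ×ˢ B₂))).toReal) atTop
        (nhds ((ν A).toReal * (ν (B₁ ×ˢ B₂)).toReal)) := by
    intro B₁ B₂ hB₁ hB₂
    set B : Set (M × Ω) := B₁ ×ˢ B₂ with hBdef
    have hB : MeasurableSet B := hB₁.prod hB₂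
    have hpre : ∀ n : ℕ, MeasurableSet (S^[n] ⁻¹' B) := fun n => (hSmeas.iterate n) hB
    have hpreB : ∀ n : ℕ, ν (S^[n] ⁻¹' B) = ν B :=
      fun n => (hSmp.iterate n).measure_preimage hB.nullMeasurableSet
    refine MeasurableSpace.induction_on_inter
      (C := fun A _ => Tendsto (fun n : ℕ => (ν (A ∩ S^[n] ⁻¹' B)).toReal) atTop
        (nhds ((ν A).toReal * (ν B).toReal)))
      generateFrom_prod.symm isPiSystem_prod ?_ ?_ ?_ ?_
    · simpa using tendsto_const_nhds
    · rintro A ⟨A₁, hA₁, A₂, hA₂, rfl⟩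
      exact hrect A₁ B₁ A₂ B₂ hA₁ hB₁ hA₂ hB₂
    · intro A hA hmix
      have hkey : ∀ n : ℕ, (ν (Aᶜ ∩ S^[n] ⁻¹' B)).toReal
          = (ν B).toReal - (ν (A ∩ S^[n] ⁻¹' B)).toReal := by
        intro n
        have h1 : ν (S^[n] ⁻¹' B ∩ A) + ν (S^[n] ⁻¹' B \ A) = ν (S^[n] ⁻¹' B) :=
          measure_inter_add_diff _ hA
        have hd : S^[n] ⁻¹' B \ A = Aᶜ ∩ S^[n] ⁻¹' B := by
          ext p; simp [Set.diff_eq, and_comm]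
        rw [hd, Set.inter_comm, hpreB n] at h1
        have := congrArg ENNReal.toReal h1
        rw [ENNReal.toReal_add (measure_ne_top _ _) (measure_ne_top _ _)] at this
        linarith
      have hlim : (ν B).toReal - (ν A).toReal * (ν B).toReal
          = (ν Aᶜ).toReal * (ν B).toReal := by
        rw [hcomplReal A hA]; ring
      have hT := (tendsto_const_nhds (x := (ν B).toReal) (f := atTop)).sub hmix
      rw [hlim] at hT
      exact hT.congr fun n => (hkey n).symm
    · intro f hdisj hfm hmix
      have hfin : ∀ i, ν (f i) ≠ ⊤ := fun i => measure_ne_top _ _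
      have hsum : Summable (fun i => (ν (f i)).toReal) :=
        ENNReal.summable_toReal (by
          rw [← measure_iUnion hdisj hfm]; exact measure_ne_top _ _)
      have hkey : ∀ n : ℕ, (ν ((⋃ i, f i) ∩ S^[n] ⁻¹' B)).toReal
          = ∑' i, (ν (f i ∩ S^[n] ⁻¹' B)).toReal := by
        intro n
        rw [Set.iUnion_inter, measure_iUnion
          (hdisj.mono fun i j h => h.mono Set.inter_subset_left Set.inter_subset_left)
          (fun i => (hfm i).inter (hpre n)),
          ENNReal.tsum_toReal_eq (fun i => measure_ne_top _ _)]
      have hlim := tendsto_tsum_of_dominated_convergence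
        (f := fun n i => (ν (f i ∩ S^[n] ⁻¹' B)).toReal)
        (g := fun i => (ν (f i)).toReal * (ν B).toReal)
        (bound := fun i => (ν (f i)).toReal) hsum hmix
        (Eventually.of_forall fun n i => by
          rw [Real.norm_eq_abs, abs_of_nonneg ENNReal.toReal_nonneg]
          exact ENNReal.toReal_mono (hfin i) (measure_mono Set.inter_subset_left))
      have hsumeq : ∑' i, (ν (f i)).toReal * (ν B).toReal
          = (ν (⋃ i, f i)).toReal * (ν B).toReal := by
        rw [tsum_mul_right, ← ENNReal.tsum_toReal_eq hfin, ← measure_iUnion hdisj hfm]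
      rw [hsumeq] at hlim
      exact hlim.congr fun n => (hkey n).symm
  -- ====== Extension in the second argument ======
  intro A B hA hB
  revert B
  refine MeasurableSpace.induction_on_inter
    (C := fun B _ => Tendsto (fun n : ℕ => (ν (A ∩ S^[n] ⁻¹' B)).toReal) atTop
      (nhds ((ν A).toReal * (ν B).toReal)))
    generateFrom_prod.symm isPiSystem_prod ?_ ?_ ?_ ?_
  · simpa using tendsto_const_nhds
  · rintro B ⟨B₁, hB₁, B₂, hB₂, rfl⟩
    exact hstepA B₁ B₂ hB₁ hB₂ A hA
  · intro B hB hmix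
    have hpre : ∀ n : ℕ, MeasurableSet (S^[n] ⁻¹' B) := fun n => (hSmeas.iterate n) hB
    have hkey : ∀ n : ℕ, (ν (A ∩ S^[n] ⁻¹' Bᶜ)).toReal
        = (ν A).toReal - (ν (A ∩ S^[n] ⁻¹' B)).toReal := by
      intro n
      have h1 : ν (A ∩ S^[n] ⁻¹' B) + ν (A \ S^[n] ⁻¹' B) = ν A :=
        measure_inter_add_diff _ (hpre n)
      have hd : A \ S^[n] ⁻¹' B = A ∩ S^[n] ⁻¹' Bᶜ := by
        ext p; simp [Set.diff_eq]
      rw [hd] at h1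
      have := congrArg ENNReal.toReal h1
      rw [ENNReal.toReal_add (measure_ne_top _ _) (measure_ne_top _ _)] at this
      linarith
    have hlim : (ν A).toReal - (ν A).toReal * (ν B).toReal
        = (ν A).toReal * (ν Bᶜ).toReal := by
      rw [hcomplReal B hB]; ring
    have hT := (tendsto_const_nhds (x := (ν A).toReal) (f := atTop)).sub hmix
    rw [hlim] at hT
    exact hT.congr fun n => (hkey n).symm
  · intro f hdisj hfm hmix
    have hfin : ∀ i, ν (f i) ≠ ⊤ := fun i => measure_ne_top _ _
    have hpreeq : ∀ (n : ℕ) (i : ℕ), ν (S^[n] ⁻¹' f i) = ν (f i) :=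
      fun n i => (hSmp.iterate n).measure_preimage (hfm i).nullMeasurableSet
    have hsum : Summable (fun i => (ν (f i)).toReal) :=
      ENNReal.summable_toReal (by
        rw [← measure_iUnion hdisj hfm]; exact measure_ne_top _ _)
    have hkey : ∀ n : ℕ, (ν (A ∩ S^[n] ⁻¹' ⋃ i, f i)).toReal
        = ∑' i, (ν (A ∩ S^[n] ⁻¹' f i)).toReal := by
      intro n
      rw [Set.preimage_iUnion, Set.inter_iUnion, measure_iUnion
        (fun i j hij => ((hdisj hij).preimage _).mono
          Set.inter_subset_right Set.inter_subset_right)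
        (fun i => hA.inter ((hSmeas.iterate n) (hfm i))),
        ENNReal.tsum_toReal_eq (fun i => measure_ne_top _ _)]
    have hlim := tendsto_tsum_of_dominated_convergence
      (f := fun n i => (ν (A ∩ S^[n] ⁻¹' f i)).toReal)
      (g := fun i => (ν A).toReal * (ν (f i)).toReal)
      (bound := fun i => (ν (f i)).toReal) hsum hmix
      (Eventually.of_forall fun n i => by
        rw [Real.norm_eq_abs, abs_of_nonneg ENNReal.toReal_nonneg]
        refine ENNReal.toReal_mono (hfin i) ?_
        calc ν (A ∩ S^[n] ⁻¹' f i) ≤ ν (S^[n] ⁻¹' f i) :=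
              measure_mono Set.inter_subset_right
          _ = ν (f i) := hpreeq n i)
    have hsumeq : ∑' i, (ν A).toReal * (ν (f i)).toReal
        = (ν A).toReal * (ν (⋃ i, f i)).toReal := by
      rw [tsum_mul_left, ← ENNReal.tsum_toReal_eq hfin, ← measure_iUnion hdisj hfm]
    rw [hsumeq] at hlim
    exact hlim.congr fun n => (hkey n).symm
end

section
/- Let P be a tail-trivial random field on Ω = Υ^{ℤ^d}, v_1, v_2 ∈ ℤ^d linearly independent, and θ_k = ϑ_{v_1}^{k^{(1)}}∘ϑ_{v_2}^{k^{(2)}} for k ∈ ℤ^2, where ϑ_v is the shift by v. Suppose ‖κ_n(t)‖ → ∞ for μ-a.e. t. If τ is ergodic with respect to μ, then the skew product S(t,ω) = (τ(t), θ_{κ(t)}ω) is ergodic with respect to μ ⊗ P. -/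
open MeasureTheory Filter Finset

/-- The σ-algebra on `Υ^{ℤ^d}` generated by the coordinates in `J`. -/
def cylinderSigma {Υ : Type*} [MeasurableSpace Υ] {d : ℕ} (J : Set (Fin d → ℤ)) :
    MeasurableSpace ((Fin d → ℤ) → Υ) :=
  ⨆ j ∈ J, MeasurableSpace.comap (fun ω => ω j) inferInstance

open scoped symmDiff ENNReal

namespace SkewAux

variable {Υ M : Type*} [mΥ : MeasurableSpace Υ] [mM : MeasurableSpace M] {d : ℕ}

lemma cylinder_mono {J J' : Set (Fin d → ℤ)} (h : J ⊆ J') :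
    cylinderSigma (Υ := Υ) J ≤ cylinderSigma J' :=
  biSup_mono h

lemma cylinder_le_pi (J : Set (Fin d → ℤ)) :
    cylinderSigma (Υ := Υ) J ≤ MeasurableSpace.pi :=
  iSup₂_le fun j _ => measurable_iff_comap_le.mp (measurable_pi_apply j)

lemma measurable_eval {J : Set (Fin d → ℤ)} {j : Fin d → ℤ} (hj : j ∈ J) :
    @Measurable _ _ (cylinderSigma (Υ := Υ) J) mΥ (fun ω => ω j) := by
  rw [measurable_iff_comap_le]
  exact le_biSup (fun a => MeasurableSpace.comap (fun ω : (Fin d → ℤ) → Υ => ω a) inferInstance) hj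

lemma measurable_shift {J J' : Set (Fin d → ℤ)} (c : Fin d → ℤ)
    (h : ∀ j ∈ J', j + c ∈ J) :
    @Measurable _ _ (cylinderSigma (Υ := Υ) J) (cylinderSigma J')
      (fun ω j => ω (j + c)) := by
  rw [measurable_iff_comap_le, cylinderSigma, MeasurableSpace.comap_iSup]
  refine iSup_le fun j => ?_
  rw [MeasurableSpace.comap_iSup]
  refine iSup_le fun hj => ?_
  rw [MeasurableSpace.comap_comp]
  exact measurable_iff_comap_le.mp (measurable_eval (h j hj))

/-- product σ-algebra with a custom σ-algebra on the second factor -/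
def pp (m₂ : MeasurableSpace ((Fin d → ℤ) → Υ)) :
    MeasurableSpace (M × ((Fin d → ℤ) → Υ)) :=
  mM.comap Prod.fst ⊔ m₂.comap Prod.snd

lemma pp_pi_eq : pp (M := M) (MeasurableSpace.pi (X := fun _ : Fin d → ℤ => Υ)) =
    Prod.instMeasurableSpace := rfl

lemma pp_mono {m₂ m₂' : MeasurableSpace ((Fin d → ℤ) → Υ)} (h : m₂ ≤ m₂') :
    pp (M := M) m₂ ≤ pp m₂' :=
  sup_le_sup_left (MeasurableSpace.comap_mono h) _

lemma pp_le (m₂ : MeasurableSpace ((Fin d → ℤ) → Υ)) (h : m₂ ≤ MeasurableSpace.pi) :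
    pp (M := M) m₂ ≤ @Prod.instMeasurableSpace M ((Fin d → ℤ) → Υ) mM MeasurableSpace.pi :=
  le_trans (pp_mono h) (pp_pi_eq (M := M) (Υ := Υ) (d := d)).le

lemma measurable_pair {γ : Type*} {mγ : MeasurableSpace γ}
    (m₂ : MeasurableSpace ((Fin d → ℤ) → Υ)) {f : γ → M} {g : γ → (Fin d → ℤ) → Υ}
    (hf : Measurable f) (hg : @Measurable _ _ mγ m₂ g) :
    @Measurable _ _ mγ (pp m₂) (fun x => (f x, g x)) := by
  rw [measurable_iff_comap_le]
  rw [measurable_iff_comap_le] at hg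
  rw [measurable_iff_comap_le] at hf
  rw [pp, MeasurableSpace.comap_sup, MeasurableSpace.comap_comp, MeasurableSpace.comap_comp]
  exact sup_le hf hg

lemma measurable_mk_left (m₂ : MeasurableSpace ((Fin d → ℤ) → Υ)) (t : M) :
    @Measurable _ _ m₂ (pp m₂) (Prod.mk t) :=
  measurable_pair m₂ measurable_const measurable_id

/-- strip decomposition measurability -/
lemma measurable_strips {α β : Type*} {mα : MeasurableSpace α} {mβ : MeasurableSpace β}
    {f : α → ℤ × ℤ} (hf : Measurable f) {G : ℤ × ℤ → α → β}
    (hG : ∀ k, @Measurable _ _ mα mβ (G k)) :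
    @Measurable _ _ mα mβ (fun a => G (f a) a) := by
  intro s hs
  have : (fun a => G (f a) a) ⁻¹' s = ⋃ k : ℤ × ℤ, (f ⁻¹' {k}) ∩ (G k ⁻¹' s) := by
    ext a
    simp only [Set.mem_preimage, Set.mem_iUnion, Set.mem_inter_iff, Set.mem_singleton_iff]
    constructor
    · intro h; exact ⟨f a, rfl, h⟩
    · rintro ⟨k, hk, h⟩; rwa [hk]
  rw [this]
  exact MeasurableSet.iUnion fun k => (hf (measurableSet_singleton k)).inter (hG k hs)

lemma exists_exact_approx {X : Type*} {mX : MeasurableSpace X} {m' : MeasurableSpace X}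
    (ρ : @Measure X mX) {A : Set X} (B : ℕ → Set X)
    (hB : ∀ j, MeasurableSet[m'] (B j)) (hsum : ∑' j, ρ (A ∆ B j) ≠ ∞) :
    ∃ C, MeasurableSet[m'] C ∧ ρ (A ∆ C) = 0 := by
  refine ⟨⋂ m, ⋃ n, ⋃ _ : m ≤ n, B n,
    MeasurableSet.iInter fun m => MeasurableSet.iUnion fun n =>
      MeasurableSet.iUnion fun _ => hB n, ?_⟩
  set C := ⋂ m, ⋃ n, ⋃ _ : m ≤ n, B n with hCdef
  have key : ∀ m, A ∆ C ⊆ ⋃ n, A ∆ B (n + m) := by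
    intro m x hx
    rcases Set.mem_symmDiff.mp hx with ⟨hxA, hxC⟩ | ⟨hxC, hxA⟩
    · simp only [hCdef, Set.mem_iInter, Set.mem_iUnion, not_forall, not_exists] at hxC
      obtain ⟨m₀, hm₀⟩ := hxC
      exact Set.mem_iUnion.mpr ⟨m₀, Set.mem_symmDiff.mpr
        (Or.inl ⟨hxA, hm₀ (m₀ + m) (Nat.le_add_right _ _)⟩)⟩
    · have := Set.mem_iInter.mp hxC m
      simp only [Set.mem_iUnion] at this
      obtain ⟨n, hn, hxn⟩ := this
      refine Set.mem_iUnion.mpr ⟨n - m, Set.mem_symmDiff.mpr (Or.inr ⟨?_, hxA⟩)⟩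
      rwa [Nat.sub_add_cancel hn]
  have hbound : ∀ m, ρ (A ∆ C) ≤ ∑' n, ρ (A ∆ B (n + m)) := fun m =>
    le_trans (measure_mono (key m)) (measure_iUnion_le _)
  have htend := ENNReal.tendsto_sum_nat_add (fun j => ρ (A ∆ B j)) hsum
  have : ρ (A ∆ C) ≤ 0 := ge_of_tendsto' htend hbound
  exact le_antisymm this zero_le

lemma exists_enum (d : ℕ) : ∃ Vm : ℕ → Finset (Fin d → ℤ),
    Monotone Vm ∧ ∀ V : Finset (Fin d → ℤ), ∃ m, V ⊆ Vm m := by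
  classical
  obtain ⟨e, he⟩ := exists_surjective_nat (Fin d → ℤ)
  refine ⟨fun m => (Finset.range m).image e, fun a b hab =>
    Finset.image_subset_image (by simpa using Finset.range_subset_range.mpr hab), fun V => ?_⟩
  choose g hg using fun x => he x
  refine ⟨(V.sup g) + 1, fun x hx => Finset.mem_image.mpr
    ⟨g x, Finset.mem_range.mpr (Nat.lt_succ_of_le (Finset.le_sup hx)), hg x⟩⟩

lemma tail_step (P : Measure ((Fin d → ℤ) → Υ))
    (htail : ∀ T : Set ((Fin d → ℤ) → Υ),
      MeasurableSet[⨅ V : Finset (Fin d → ℤ), cylinderSigma ((↑V : Set (Fin d → ℤ))ᶜ)] T →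
      P T = 0 ∨ P T = 1)
    (Vm : ℕ → Finset (Fin d → ℤ)) (hVmono : Monotone Vm)
    (hcof : ∀ V : Finset (Fin d → ℤ), ∃ m, V ⊆ Vm m)
    (B : Set ((Fin d → ℤ) → Υ)) (C : ℕ → Set ((Fin d → ℤ) → Υ))
    (hC : ∀ m, MeasurableSet[cylinderSigma (Υ := Υ) ((↑(Vm m) : Set (Fin d → ℤ))ᶜ)] (C m))
    (hnull : ∀ m, P (B ∆ C m) = 0) : P B = 0 ∨ P B = 1 := by
  set D := ⋂ m, ⋃ n, ⋃ _ : m ≤ n, C n with hDdef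
  have hmeasD : MeasurableSet[⨅ V : Finset (Fin d → ℤ),
      cylinderSigma ((↑V : Set (Fin d → ℤ))ᶜ)] D := by
    rw [MeasurableSpace.measurableSet_iInf]
    intro V
    obtain ⟨k, hk⟩ := hcof V
    have hD : D = ⋂ m, ⋃ n, ⋃ _ : m + k ≤ n, C n := by
      apply Set.Subset.antisymm
      · intro x hx
        exact Set.mem_iInter.mpr fun m => Set.mem_iInter.mp hx (m + k)
      · intro x hx
        refine Set.mem_iInter.mpr fun m => ?_
        have := Set.mem_iInter.mp hx m
        simp only [Set.mem_iUnion] at this ⊢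
        obtain ⟨n, hn, hxn⟩ := this
        exact ⟨n, le_trans (Nat.le_add_right m k) hn, hxn⟩
    rw [hD]
    refine MeasurableSet.iInter fun m => MeasurableSet.iUnion fun n =>
      MeasurableSet.iUnion fun hn => ?_
    have hsub : ((↑(Vm n) : Set (Fin d → ℤ))ᶜ : Set (Fin d → ℤ)) ⊆ (↑V : Set (Fin d → ℤ))ᶜ := by
      refine Set.compl_subset_compl.mpr ?_
      exact fun x hx => Finset.mem_coe.mpr
        ((hVmono (le_trans (Nat.le_add_left k m) hn)) (hk (Finset.mem_coe.mp hx)))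
    exact cylinder_mono hsub _ (hC n)
  have hnullD : P (B ∆ D) = 0 := by
    have hsub : B ∆ D ⊆ ⋃ m, B ∆ C m := by
      intro x hx
      rcases Set.mem_symmDiff.mp hx with ⟨hxB, hxD⟩ | ⟨hxD, hxB⟩
      · simp only [hDdef, Set.mem_iInter, Set.mem_iUnion, not_forall, not_exists] at hxD
        obtain ⟨m₀, hm₀⟩ := hxD
        exact Set.mem_iUnion.mpr ⟨m₀, Set.mem_symmDiff.mpr
          (Or.inl ⟨hxB, hm₀ m₀ le_rfl⟩)⟩
      · have := Set.mem_iInter.mp hxD 0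
        simp only [Set.mem_iUnion] at this
        obtain ⟨n, _, hxn⟩ := this
        exact Set.mem_iUnion.mpr ⟨n, Set.mem_symmDiff.mpr (Or.inr ⟨hxn, hxB⟩)⟩
    exact measure_mono_null hsub (measure_iUnion_null fun m => hnull m)
  have hBD : P B = P D := measure_congr (measure_symmDiff_eq_zero_iff.mp hnullD)
  rw [hBD]
  exact htail D hmeasD
lemma measurable_fst_pp (m₂ : MeasurableSpace ((Fin d → ℤ) → Υ)) :
    @Measurable _ _ (pp (M := M) m₂) mM Prod.fst :=
  measurable_iff_comap_le.2 le_sup_left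

lemma measurable_snd_pp (m₂ : MeasurableSpace ((Fin d → ℤ) → Υ)) :
    @Measurable _ _ (pp (M := M) m₂) m₂ Prod.snd :=
  measurable_iff_comap_le.2 le_sup_right

lemma generate_eq :
    (Prod.instMeasurableSpace : MeasurableSpace (M × ((Fin d → ℤ) → Υ))) =
    MeasurableSpace.generateFrom {U | ∃ W : Finset (Fin d → ℤ),
      MeasurableSet[pp (M := M) (cylinderSigma (↑W : Set (Fin d → ℤ)))] U} := by
  apply le_antisymm
  · rw [← pp_pi_eq (M := M) (Υ := Υ) (d := d), pp]
    apply sup_le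
    · rw [MeasurableSpace.le_def]
      intro s hs
      obtain ⟨s', hs', rfl⟩ := hs
      apply MeasurableSpace.measurableSet_generateFrom
      refine ⟨∅, ?_⟩
      have h := @measurable_iff_comap_le (M × ((Fin d → ℤ) → Υ)) M
        (pp (M := M) (cylinderSigma (↑(∅ : Finset (Fin d → ℤ)) : Set (Fin d → ℤ)))) mM Prod.fst
      exact h.2 le_sup_left hs'
    · rw [MeasurableSpace.pi, MeasurableSpace.comap_iSup]
      refine iSup_le fun j => ?_
      rw [MeasurableSpace.comap_comp, MeasurableSpace.le_def]
      intro s hs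
      obtain ⟨s', hs', rfl⟩ := hs
      apply MeasurableSpace.measurableSet_generateFrom
      refine ⟨{j}, ?_⟩
      have hle : (mΥ.comap fun b : (Fin d → ℤ) → Υ => b j).comap
          (Prod.snd : M × ((Fin d → ℤ) → Υ) → (Fin d → ℤ) → Υ) ≤
          pp (M := M) (cylinderSigma (↑({j} : Finset (Fin d → ℤ)) : Set (Fin d → ℤ))) := by
        refine le_trans (MeasurableSpace.comap_mono ?_) le_sup_right
        exact le_biSup (fun a => MeasurableSpace.comap
          (fun ω : (Fin d → ℤ) → Υ => ω a) inferInstance) (by simp)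
      exact hle _ ⟨(fun b : (Fin d → ℤ) → Υ => b j) ⁻¹' s', ⟨s', hs', rfl⟩, rfl⟩
  · refine MeasurableSpace.generateFrom_le fun U hU => ?_
    obtain ⟨W, hW⟩ := hU
    exact pp_le (cylinderSigma _) (cylinder_le_pi _) U hW

lemma measure_dense (ρ : Measure (M × ((Fin d → ℤ) → Υ))) [IsFiniteMeasure ρ] :
    ρ.MeasureDense {U | ∃ W : Finset (Fin d → ℤ),
      MeasurableSet[pp (M := M) (cylinderSigma (↑W : Set (Fin d → ℤ)))] U} := by
  refine Measure.MeasureDense.of_generateFrom_isSetAlgebra_finite ρ ?_ generate_eq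
  constructor
  · exact ⟨∅, @MeasurableSet.empty _ (pp (M := M) (cylinderSigma (↑(∅ : Finset (Fin d → ℤ)) : Set (Fin d → ℤ))))⟩
  · rintro s ⟨W, hs⟩
    exact ⟨W, hs.compl⟩
  · rintro s t ⟨W, hs⟩ ⟨W', ht⟩
    refine ⟨W ∪ W', MeasurableSet.union ?_ ?_⟩
    · exact pp_mono (cylinder_mono (by simp [Set.subset_def]; intro x hx; exact Or.inl hx)) _ hs
    · exact pp_mono (cylinder_mono (by simp [Set.subset_def]; intro x hx; exact Or.inr hx)) _ ht

end SkewAux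

open SkewAux in
/-- for a tail-trivial random field `P`, two linearly independent shift
directions `v₁, v₂`, the two-parameter shift group `θ_k = ϑ_{v₁}^{k₁} ∘ ϑ_{v₂}^{k₂}`, and a
cocycle with `‖κ_n(t)‖ → ∞` μ-a.e., ergodicity of `τ` implies ergodicity of the skew
product w.r.t. `μ ⊗ P`. -/
theorem skew_product_shift_ergodic
    {Υ M : Type*} [MeasurableSpace Υ] [MeasurableSpace M] {d : ℕ}
    (μ : Measure M) (P : Measure ((Fin d → ℤ) → Υ))
    [IsProbabilityMeasure μ] [IsProbabilityMeasure P]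
    -- stationarity: P is invariant under all shifts
    (hinv : ∀ v : Fin d → ℤ,
      MeasurePreserving (fun ω (j : Fin d → ℤ) => ω (j + v)) P P)
    -- tail triviality
    (htail : ∀ T : Set ((Fin d → ℤ) → Υ),
      MeasurableSet[⨅ V : Finset (Fin d → ℤ), cylinderSigma ((↑V : Set (Fin d → ℤ))ᶜ)] T →
      P T = 0 ∨ P T = 1)
    (v₁ v₂ : Fin d → ℤ)
    -- linear independence of v₁ and v₂
    (hindep : ∀ a b : ℤ, a • v₁ + b • v₂ = 0 → a = 0 ∧ b = 0)
    (τ : M → M) (hτ : MeasurePreserving τ μ μ)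
    (κ : M → ℤ × ℤ) (hκ : Measurable κ)
    -- `‖κ_n(t)‖ → ∞` for μ-a.e. t
    (hκinf : ∀ᵐ t ∂μ,
      Tendsto (fun n : ℕ => ∑ i ∈ Finset.range n, κ (τ^[i] t)) atTop cofinite)
    (hergτ : Ergodic τ μ) :
    Ergodic (fun p : M × ((Fin d → ℤ) → Υ) =>
        (τ p.1, fun j => p.2 (j + (κ p.1).1 • v₁ + (κ p.1).2 • v₂))) (μ.prod P) := by

  classical
  set vec : ℤ × ℤ → (Fin d → ℤ) := fun k => k.1 • v₁ + k.2 • v₂ with hvecdef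
  set θ : (Fin d → ℤ) → ((Fin d → ℤ) → Υ) → ((Fin d → ℤ) → Υ) :=
    fun c ω j => ω (j + c) with hθdef
  set S : M × ((Fin d → ℤ) → Υ) → M × ((Fin d → ℤ) → Υ) :=
    fun p => (τ p.1, fun j => p.2 (j + (κ p.1).1 • v₁ + (κ p.1).2 • v₂)) with hSdef
  have hS : ∀ p, S p = (τ p.1, θ (vec (κ p.1)) p.2) := by
    intro p
    refine Prod.ext rfl ?_
    funext j
    exact congrArg p.2 (add_assoc _ _ _)
  have hθfull : ∀ c, Measurable (θ c) := fun c =>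
    measurable_pi_lambda _ fun j => measurable_pi_apply _
  have hθmp : ∀ c, MeasurePreserving (θ c) P P := fun c => hinv c
  have hSfun : S = fun p => (τ p.1, θ (vec (κ p.1)) p.2) := funext hS
  have hSmeas : Measurable S := by
    rw [hSfun]
    exact Measurable.prodMk (hτ.measurable.comp measurable_fst)
      (measurable_strips (hκ.comp measurable_fst)
        (fun k => (hθfull (vec k)).comp measurable_snd))
  have hmk : ∀ (E : Set (M × ((Fin d → ℤ) → Υ))) t,
      Prod.mk t ⁻¹' (S ⁻¹' E) = θ (vec (κ t)) ⁻¹' (Prod.mk (τ t) ⁻¹' E) := by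
    intro E t
    ext ω
    simp only [Set.mem_preimage, hS (t, ω)]
  have hSmp : MeasurePreserving S (μ.prod P) (μ.prod P) := by
    refine ⟨hSmeas, ?_⟩
    refine Measure.ext fun E hE => ?_
    rw [Measure.map_apply hSmeas hE, Measure.prod_apply (hSmeas hE), Measure.prod_apply hE]
    have hptw : ∀ t, P (Prod.mk t ⁻¹' (S ⁻¹' E)) = P (Prod.mk (τ t) ⁻¹' E) := by
      intro t
      rw [hmk E t]
      exact (hθmp (vec (κ t))).measure_preimage
        (measurable_prodMk_left hE).nullMeasurableSet
    simp_rw [hptw]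
    exact hτ.lintegral_comp (measurable_measure_prodMk_left hE)
  haveI : MeasurableAdd₂ (ℤ × ℤ) := ⟨measurable_of_countable _⟩
  set κs : ℕ → M → ℤ × ℤ := fun n t => ∑ i ∈ Finset.range n, κ (τ^[i] t) with hκsdef
  have hκs_meas : ∀ n, Measurable (κs n) := fun n =>
    Finset.measurable_sum _ (fun i _ => hκ.comp (hτ.measurable.iterate i))
  have vec_inj : Function.Injective vec := by
    intro k k' hkk
    have h0 : (k.1 - k'.1) • v₁ + (k.2 - k'.2) • v₂ = 0 := by
      have h1 : (k.1 • v₁ + k.2 • v₂) - (k'.1 • v₁ + k'.2 • v₂) = 0 := by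
        rw [show k.1 • v₁ + k.2 • v₂ = vec k from rfl, show k'.1 • v₁ + k'.2 • v₂ = vec k' from rfl,
          hkk, sub_self]
      rw [sub_smul, sub_smul]
      rw [← h1]
      abel
    obtain ⟨h1, h2⟩ := hindep _ _ h0
    exact Prod.ext (by omega) (by omega)
  have hvadd : ∀ a b : ℤ × ℤ, vec (a + b) = vec a + vec b := by
    intro a b
    show (a + b).1 • v₁ + (a + b).2 • v₂ = (a.1 • v₁ + a.2 • v₂) + (b.1 • v₁ + b.2 • v₂)
    rw [Prod.fst_add, Prod.snd_add, add_smul, add_smul]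
    abel
  have hSit : ∀ (n : ℕ) (t : M) (ω : (Fin d → ℤ) → Υ),
      S^[n] (t, ω) = (τ^[n] t, θ (vec (κs n t)) ω) := by
    intro n
    induction n with
    | zero =>
      intro t ω
      have hv0 : vec (κs 0 t) = 0 := by
        show vec (∑ i ∈ Finset.range 0, κ (τ^[i] t)) = 0
        rw [Finset.sum_range_zero]
        show (0 : ℤ × ℤ).1 • v₁ + (0 : ℤ × ℤ).2 • v₂ = 0
        simp
      rw [Function.iterate_zero, Function.iterate_zero]
      refine Prod.ext rfl ?_
      funext j
      show ω j = ω (j + vec (κs 0 t))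
      rw [hv0, add_zero]
    | succ n ih =>
      intro t ω
      rw [Function.iterate_succ_apply', ih, hS]
      refine Prod.ext ?_ ?_
      · exact (Function.iterate_succ_apply' τ n t).symm
      · show θ (vec (κ (τ^[n] t))) (θ (vec (κs n t)) ω) = θ (vec (κs (n + 1) t)) ω
        funext j
        show ω ((j + vec (κ (τ^[n] t))) + vec (κs n t)) = ω (j + vec (κs (n + 1) t))
        apply congrArg ω
        have hsum : κs (n + 1) t = κs n t + κ (τ^[n] t) := Finset.sum_range_succ _ n
        rw [hsum, hvadd]
        abel
  -- ergodicity
  refine ⟨hSmp, ⟨fun A hA hAinv => ?_⟩⟩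
  have hAiter : ∀ n, S^[n] ⁻¹' A = A := by
    intro n
    induction n with
    | zero => rfl
    | succ n ih =>
      rw [Function.iterate_succ, Set.preimage_comp, ih, hAinv]
  obtain ⟨Vm, hVmono, hVcof⟩ := exists_enum d
  -- the key approximation
  have key : ∀ V : Finset (Fin d → ℤ), ∃ C,
      MeasurableSet[pp (M := M) (cylinderSigma ((↑V : Set (Fin d → ℤ))ᶜ))] C ∧
      (μ.prod P) (A ∆ C) = 0 := by
    intro V
    have happrox : ∀ ε : ℝ, 0 < ε → ∃ B,
        MeasurableSet[pp (M := M) (cylinderSigma ((↑V : Set (Fin d → ℤ))ᶜ))] B ∧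
        (μ.prod P) (A ∆ B) < 2 * ENNReal.ofReal ε := by
      intro ε hε
      obtain ⟨U, hUmem, hU⟩ := (measure_dense (μ.prod P)).approx A hA (measure_ne_top _ _) ε hε
      obtain ⟨W, hUW⟩ := hUmem
      have hUmeas : MeasurableSet U := pp_le _ (cylinder_le_pi _) _ hUW
      set Kv : Set (Fin d → ℤ) :=
        {c | ∃ j ∈ (↑W : Set (Fin d → ℤ)), j + c ∈ (↑V : Set (Fin d → ℤ))} with hKvdef
      have hKvfin : Kv.Finite := by
        have hsub : Kv ⊆ (fun q : (Fin d → ℤ) × (Fin d → ℤ) => q.1 - q.2) ''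
            ((↑V : Set (Fin d → ℤ)) ×ˢ (↑W : Set (Fin d → ℤ))) := by
          rintro c ⟨j, hj, hjc⟩
          exact ⟨(j + c, j), ⟨hjc, hj⟩, by simp⟩
        exact ((V.finite_toSet.prod W.finite_toSet).image _).subset hsub
      set K : Set (ℤ × ℤ) := vec ⁻¹' Kv with hKdef
      have hKfin : K.Finite := hKvfin.preimage vec_inj.injOn
      set bad : ℕ → Set M := fun n => κs n ⁻¹' K with hbaddef
      have hbadmeas : ∀ n, MeasurableSet (bad n) :=
        fun n => hκs_meas n K.to_countable.measurableSet
      have hbad0 : Tendsto (fun n => μ (bad n)) atTop (nhds 0) := by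
        have hind : ∀ᵐ t ∂μ, Tendsto (fun n => (bad n).indicator
            (fun _ => (1 : ℝ≥0∞)) t) atTop (nhds 0) := by
          filter_upwards [hκinf] with t ht
          have h2 : Tendsto (fun n => κs n t) atTop cofinite := ht
          have h3 : ∀ᶠ n in atTop, κs n t ∉ K := h2.eventually (Set.Finite.eventually_cofinite_notMem hKfin)
          refine Tendsto.congr' ?_ tendsto_const_nhds
          filter_upwards [h3] with n hn
          have : t ∉ bad n := hn
          rw [Set.indicator_of_notMem this]
        have heq : ∀ n, μ (bad n) = ∫⁻ t, (bad n).indicator (fun _ => (1 : ℝ≥0∞)) t ∂μ :=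
          fun n => (lintegral_indicator_one (hbadmeas n)).symm
        simp_rw [heq]
        have hDCT := tendsto_lintegral_of_dominated_convergence (μ := μ)
          (F := fun n => (bad n).indicator (fun _ => (1 : ℝ≥0∞))) (f := fun _ => 0)
          (fun _ => (1 : ℝ≥0∞))
          (fun n => measurable_const.indicator (hbadmeas n))
          (fun n => Filter.Eventually.of_forall fun t =>
            Set.indicator_le' (fun _ _ => le_rfl) (fun _ _ => zero_le) t)
          (by simp)
          hind
        simpa using hDCT
      obtain ⟨n, hn⟩ : ∃ n, μ (bad n) < ENNReal.ofReal ε :=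
        (hbad0.eventually_lt_const (ENNReal.ofReal_pos.mpr hε)).exists
      have hSitp : ∀ p : M × ((Fin d → ℤ) → Υ),
          S^[n] p = (τ^[n] p.1, θ (vec (κs n p.1)) p.2) := fun p => hSit n p.1 p.2
      set B : Set (M × ((Fin d → ℤ) → Υ)) := ⋃ k : ℤ × ℤ,
        if k ∈ K then ∅ else
          (((fun p : M × ((Fin d → ℤ) → Υ) => κs n p.1) ⁻¹' {k}) ∩
           ((fun p : M × ((Fin d → ℤ) → Υ) => (τ^[n] p.1, θ (vec k) p.2)) ⁻¹' U)) with hBdef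
      have hBmeas : MeasurableSet[pp (M := M) (cylinderSigma ((↑V : Set (Fin d → ℤ))ᶜ))] B := by
        refine MeasurableSet.iUnion fun k => ?_
        split_ifs with hk
        · exact @MeasurableSet.empty _ (pp (M := M) (cylinderSigma ((↑V : Set (Fin d → ℤ))ᶜ)))
        · refine MeasurableSet.inter ?_ ?_
          · exact ((hκs_meas n).comp (measurable_fst_pp _)) (measurableSet_singleton k)
          · have hshift : ∀ j ∈ (↑W : Set (Fin d → ℤ)), j + vec k ∈ (↑V : Set (Fin d → ℤ))ᶜ := by
              intro j hj hcon
              exact hk ⟨j, hj, hcon⟩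
            exact (measurable_pair (cylinderSigma (↑W : Set (Fin d → ℤ)))
              ((hτ.measurable.iterate n).comp (measurable_fst_pp _))
              ((measurable_shift (vec k) hshift).comp (measurable_snd_pp _))) hUW
      have hBmeasTop : MeasurableSet B := pp_le _ (cylinder_le_pi _) _ hBmeas
      have hincl : A ∆ B ⊆ (S^[n] ⁻¹' (A ∆ U)) ∪
          (bad n ×ˢ (Set.univ : Set ((Fin d → ℤ) → Υ))) := by
        intro p hp
        by_cases hb : p.1 ∈ bad n
        · exact Or.inr ⟨hb, trivial⟩
        · left
          have hBiff : p ∈ B ↔ S^[n] p ∈ U := by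
            constructor
            · intro hpB
              obtain ⟨k, hps⟩ := Set.mem_iUnion.mp hpB
              by_cases hk : k ∈ K
              · rw [if_pos hk] at hps
                exact absurd hps (Set.notMem_empty p)
              · rw [if_neg hk] at hps
                obtain ⟨hstrip, hFU⟩ := hps
                have hkp : κs n p.1 = k := hstrip
                have hSp : S^[n] p = (τ^[n] p.1, θ (vec k) p.2) := by
                  rw [hSitp p, hkp]
                rw [hSp]
                exact hFU
            · intro hSU
              refine Set.mem_iUnion.mpr ⟨κs n p.1, ?_⟩
              have hb' : κs n p.1 ∉ K := hb
              rw [if_neg hb']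
              refine ⟨rfl, ?_⟩
              show (τ^[n] p.1, θ (vec (κs n p.1)) p.2) ∈ U
              rw [← hSitp p]
              exact hSU
          have hAiffn : p ∈ A ↔ S^[n] p ∈ A := by
            conv_lhs => rw [← hAiter n]
            exact Iff.rfl
          rcases Set.mem_symmDiff.mp hp with ⟨hpA, hpB⟩ | ⟨hpB, hpA⟩
          · exact Set.mem_symmDiff.mpr (Or.inl ⟨hAiffn.mp hpA, fun hc => hpB (hBiff.mpr hc)⟩)
          · exact Set.mem_symmDiff.mpr (Or.inr ⟨hBiff.mp hpB, fun hc => hpA (hAiffn.mpr hc)⟩)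
      refine ⟨B, hBmeas, ?_⟩
      calc (μ.prod P) (A ∆ B)
          ≤ (μ.prod P) (S^[n] ⁻¹' (A ∆ U)) + (μ.prod P) (bad n ×ˢ Set.univ) :=
            le_trans (measure_mono hincl) (measure_union_le _ _)
        _ = (μ.prod P) (A ∆ U) + μ (bad n) * P Set.univ := by
            rw [(hSmp.iterate n).measure_preimage (hA.symmDiff hUmeas).nullMeasurableSet,
              Measure.prod_prod]
        _ = (μ.prod P) (A ∆ U) + μ (bad n) := by rw [measure_univ, mul_one]
        _ < ENNReal.ofReal ε + ENNReal.ofReal ε := ENNReal.add_lt_add hU hn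
        _ = 2 * ENNReal.ofReal ε := by rw [two_mul]
    have hBj : ∀ j : ℕ, ∃ B,
        MeasurableSet[pp (M := M) (cylinderSigma ((↑V : Set (Fin d → ℤ))ᶜ))] B ∧
        (μ.prod P) (A ∆ B) ≤ 2 * (2⁻¹ : ℝ≥0∞) ^ j := by
      intro j
      obtain ⟨B, h1, h2⟩ := happrox ((2⁻¹ : ℝ) ^ j) (by positivity)
      refine ⟨B, h1, ?_⟩
      have hcast : ENNReal.ofReal ((2⁻¹ : ℝ) ^ j) = (2⁻¹ : ℝ≥0∞) ^ j := by
        rw [ENNReal.ofReal_pow (by norm_num)]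
        congr 1
        rw [ENNReal.ofReal_inv_of_pos (by norm_num)]
        norm_num
      rw [hcast] at h2
      exact le_of_lt h2
    choose Bj hBjmeas hBjle using hBj
    refine exists_exact_approx (m' := pp (M := M) (cylinderSigma ((↑V : Set (Fin d → ℤ))ᶜ)))
      (μ.prod P) Bj hBjmeas ?_
    have hle : ∑' j : ℕ, (μ.prod P) (A ∆ Bj j) ≤ ∑' j : ℕ, 2 * (2⁻¹ : ℝ≥0∞) ^ j :=
      ENNReal.tsum_le_tsum hBjle
    refine ne_top_of_le_ne_top ?_ hle
    rw [ENNReal.tsum_mul_left, ENNReal.tsum_geometric]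
    exact ENNReal.mul_ne_top (by norm_num) (by simp [ENNReal.one_sub_inv_two])
  choose AV hAVmeas hAVnull using fun m => key (Vm m)
  have hAVmeas' : ∀ m, MeasurableSet (AV m) := fun m =>
    pp_le _ (cylinder_le_pi _) _ (hAVmeas m)
  have hsec : ∀ᵐ t ∂μ, ∀ m, P ((Prod.mk t ⁻¹' A) ∆ (Prod.mk t ⁻¹' AV m)) = 0 := by
    rw [ae_all_iff]
    intro m
    filter_upwards [Measure.measure_ae_null_of_prod_null (hAVnull m)] with t ht
    rw [Pi.zero_apply] at ht
    rw [← Set.preimage_symmDiff]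
    exact ht
  have h01 : ∀ᵐ t ∂μ, P (Prod.mk t ⁻¹' A) = 0 ∨ P (Prod.mk t ⁻¹' A) = 1 := by
    filter_upwards [hsec] with t ht
    exact tail_step P htail Vm hVmono hVcof _ (fun m => Prod.mk t ⁻¹' AV m)
      (fun m => measurable_mk_left _ t (hAVmeas m)) ht
  set h : M → ℝ≥0∞ := fun t => P (Prod.mk t ⁻¹' A) with hhdef
  have hhmeas : Measurable h := measurable_measure_prodMk_left hA
  have hhinv : ∀ t, h (τ t) = h t := by
    intro t
    have hsect : Prod.mk t ⁻¹' A = θ (vec (κ t)) ⁻¹' (Prod.mk (τ t) ⁻¹' A) := by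
      conv_lhs => rw [← hAinv]
      exact hmk A t
    show P (Prod.mk (τ t) ⁻¹' A) = P (Prod.mk t ⁻¹' A)
    rw [hsect, (hθmp (vec (κ t))).measure_preimage
      (measurable_prodMk_left hA).nullMeasurableSet]
  set D := h ⁻¹' {1} with hDdef
  have hDmeas : MeasurableSet D := hhmeas (measurableSet_singleton 1)
  have hDinv : τ ⁻¹' D = D := by
    ext t
    simp only [hDdef, Set.mem_preimage, Set.mem_singleton_iff, hhinv t]
  have hμD : μ D = 0 ∨ μ D = 1 :=
    hergτ.toPreErgodic.prob_eq_zero_or_one hDmeas hDinv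
  have hρA : (μ.prod P) A = μ D := by
    rw [Measure.prod_apply hA]
    have hcongr : (fun t => P (Prod.mk t ⁻¹' A)) =ᵐ[μ] D.indicator (fun _ => 1) := by
      filter_upwards [h01] with t ht
      rcases ht with h0 | h1
      · have hnot : t ∉ D := by
          simp only [hDdef, Set.mem_preimage, Set.mem_singleton_iff]
          show ¬ h t = 1
          rw [show h t = P (Prod.mk t ⁻¹' A) from rfl, h0]
          simp
        rw [Set.indicator_of_notMem hnot, h0]
      · have hmem : t ∈ D := by
          simp only [hDdef, Set.mem_preimage, Set.mem_singleton_iff]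
          show h t = 1
          rw [show h t = P (Prod.mk t ⁻¹' A) from rfl, h1]
        rw [Set.indicator_of_mem hmem, h1]
    rw [lintegral_congr_ae hcongr]
    exact lintegral_indicator_one hDmeas
  rw [Filter.eventuallyConst_set]
  rcases hμD with h0 | h1
  · right
    have : (μ.prod P) A = 0 := hρA.trans h0
    exact (measure_eq_zero_iff_ae_notMem).mp this
  · left
    have hA1 : (μ.prod P) A = 1 := hρA.trans h1
    have hAc : (μ.prod P) Aᶜ = 0 := by
      rw [measure_compl hA (measure_ne_top _ _), hA1, measure_univ, tsub_self]
    filter_upwards [(measure_eq_zero_iff_ae_notMem).mp hAc] with p hp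
    simpa using hp
end

section
/- Let τ be periodic with period q and F ∈ L^1(μ ⊗ P). If for μ-almost every t the transformation θ_{κ_q(t)} is ergodic with respect to P, then for μ-a.e. t, the averages (1/n)Σ_{i=0}^{n-1} F(τ^i(t), θ_{κ_i(t)}ω) converge, P-almost surely and in L^1(P), to the constant (1/q)Σ_{ν=0}^{q−1} E_P[F(τ^ν(t), ·)]. -/
open MeasureTheory Filter Finset

open Topology

set_option linter.unusedSectionVars false
set_option linter.unnecessarySimpa false
set_option maxHeartbeats 2000000

section Birkhoff
variable {Ω : Type*} [MeasurableSpace Ω] {P : Measure Ω} [IsProbabilityMeasure P] {S : Ω → Ω}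

lemma integral_comp_mp (hS : MeasurePreserving S P P) {g : Ω → ℝ}
    (hg : AEStronglyMeasurable g P) : ∫ x, g (S x) ∂P = ∫ x, g x ∂P := by
  rw [← MeasureTheory.integral_map hS.aemeasurable (by rwa [hS.map_eq])]
  rw [hS.map_eq]

lemma integrable_comp_mp (hS : MeasurePreserving S P P) {g : Ω → ℝ}
    (hg : Integrable g P) : Integrable (fun x => g (S x)) P :=
  (hS.integrable_comp hg.aestronglyMeasurable).mpr hg

lemma integrable_birkhoffSum (hS : MeasurePreserving S P P) {g : Ω → ℝ}
    (hg : Integrable g P) (n : ℕ) : Integrable (birkhoffSum S g n) P := by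
  have : ∀ i : ℕ, Integrable (fun x => g (S^[i] x)) P :=
    fun i => integrable_comp_mp (hS.iterate i) hg
  exact (integrable_finset_sum (Finset.range n) (fun i _ => this i)).congr
    (Filter.Eventually.of_forall fun x => by simp [birkhoffSum])

lemma stronglyMeasurable_birkhoffSum (hS : Measurable S) {g : Ω → ℝ}
    (hg : StronglyMeasurable g) (n : ℕ) : StronglyMeasurable (birkhoffSum S g n) := by
  have : ∀ i : ℕ, StronglyMeasurable (fun x => g (S^[i] x)) :=
    fun i => hg.comp_measurable (hS.iterate i)
  convert Finset.stronglyMeasurable_sum (Finset.range n) (fun i _ => this i) using 1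
  ext x; simp [birkhoffSum]

/-- maximum of birkhoff sums of lengths `0,...,N` -/
noncomputable def maxBS (S : Ω → Ω) (g : Ω → ℝ) : ℕ → Ω → ℝ
  | 0 => fun _ => 0
  | (N+1) => fun x => max (maxBS S g N x) (birkhoffSum S g (N+1) x)

lemma maxBS_nonneg (g : Ω → ℝ) (N : ℕ) (x : Ω) : 0 ≤ maxBS S g N x := by
  induction N with
  | zero => simp [maxBS]
  | succ N ih => exact le_trans ih (le_max_left _ _)

lemma maxBS_mono (g : Ω → ℝ) {N N' : ℕ} (h : N ≤ N') (x : Ω) :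
    maxBS S g N x ≤ maxBS S g N' x := by
  induction N' with
  | zero => simpa [Nat.le_zero.mp h] using le_refl _
  | succ N' ih =>
    rcases Nat.le_succ_iff.mp h with h' | h'
    · exact le_trans (ih h') (le_max_left _ _)
    · simp [h']

lemma birkhoffSum_le_maxBS (g : Ω → ℝ) {k N : ℕ} (h1 : 1 ≤ k) (h2 : k ≤ N) (x : Ω) :
    birkhoffSum S g k x ≤ maxBS S g N x := by
  induction N with
  | zero => omega
  | succ N ih =>
    rcases Nat.le_succ_iff.mp h2 with h' | h'
    · exact le_trans (ih h') (le_max_left _ _)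
    · subst h'; exact le_max_right _ _

lemma pos_maxBS_iff (g : Ω → ℝ) (N : ℕ) (x : Ω) :
    0 < maxBS S g N x ↔ ∃ k, 1 ≤ k ∧ k ≤ N ∧ 0 < birkhoffSum S g k x := by
  constructor
  · intro h
    induction N with
    | zero => simp [maxBS] at h
    | succ N ih =>
      rcases lt_max_iff.mp h with h' | h'
      · obtain ⟨k, h1, h2, h3⟩ := ih h'
        exact ⟨k, h1, h2.trans (Nat.le_succ _), h3⟩
      · exact ⟨N+1, Nat.succ_le_succ (Nat.zero_le _), le_refl _, h'⟩
  · rintro ⟨k, h1, h2, h3⟩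
    exact lt_of_lt_of_le h3 (birkhoffSum_le_maxBS g h1 h2 x)

lemma maxBS_key (g : Ω → ℝ) (N : ℕ) (x : Ω) :
    maxBS S g N x ≤ max 0 (g x + maxBS S g N (S x)) := by
  induction N with
  | zero => simp [maxBS]
  | succ N ih =>
    apply max_le
    · exact ih.trans (max_le_max (le_refl _)
        (add_le_add (le_refl _) (maxBS_mono g (Nat.le_succ _) _)))
    · refine le_trans ?_ (le_max_right _ _)
      rw [birkhoffSum_succ' S g N x]
      refine add_le_add (le_refl _) ?_
      rcases Nat.eq_zero_or_pos N with h | h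
      · subst h; simpa [birkhoffSum_zero] using maxBS_nonneg g 1 (S x)
      · exact birkhoffSum_le_maxBS g h (Nat.le_succ _) _

lemma integrable_maxBS (hS : MeasurePreserving S P P) {g : Ω → ℝ}
    (hg : Integrable g P) (N : ℕ) : Integrable (maxBS S g N) P := by
  induction N with
  | zero => simpa [maxBS] using integrable_const (0:ℝ)
  | succ N ih =>
    have h := ih.sup (integrable_birkhoffSum hS hg (N+1))
    exact h.congr (by filter_upwards with x; simp [maxBS, Pi.sup_apply])

lemma stronglyMeasurable_maxBS (hS : Measurable S) {g : Ω → ℝ}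
    (hg : StronglyMeasurable g) (N : ℕ) : StronglyMeasurable (maxBS S g N) := by
  induction N with
  | zero => simpa [maxBS] using stronglyMeasurable_const
  | succ N ih =>
    exact ih.sup (stronglyMeasurable_birkhoffSum hS hg (N+1))

/-- The maximal ergodic theorem. -/
lemma maximal_ergodic (hS : MeasurePreserving S P P) {g : Ω → ℝ}
    (hgm : StronglyMeasurable g) (hg : Integrable g P) (N : ℕ) :
    0 ≤ ∫ x in {x | 0 < maxBS S g N x}, g x ∂P := by
  set Φ := maxBS S g N with hΦ
  set A := {x | 0 < Φ x} with hA
  have hΦm : StronglyMeasurable Φ := stronglyMeasurable_maxBS hS.measurable hgm N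
  have hΦi : Integrable Φ P := integrable_maxBS hS hg N
  have hΦSi : Integrable (fun x => Φ (S x)) P :=
    (hS.integrable_comp hΦi.aestronglyMeasurable).mpr hΦi
  have hAm : MeasurableSet A := measurableSet_lt measurable_const hΦm.measurable
  -- key pointwise inequality on A
  have key : ∀ x ∈ A, Φ x - Φ (S x) ≤ g x := by
    intro x hx
    have h1 : Φ x ≤ max 0 (g x + Φ (S x)) := maxBS_key g N x
    have hx' : (0:ℝ) < Φ x := hx
    rcases max_cases 0 (g x + Φ (S x)) with ⟨h2, _⟩ | ⟨h2, _⟩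
    · rw [h2] at h1; linarith
    · rw [h2] at h1; linarith
  -- ∫_A Φ = ∫ Φ
  have hAΦ : ∫ x in A, Φ x ∂P = ∫ x, Φ x ∂P := by
    rw [← integral_add_compl hAm hΦi]
    have : ∫ x in Aᶜ, Φ x ∂P = 0 := by
      apply setIntegral_eq_zero_of_forall_eq_zero
      intro x hx
      have h0 : ¬ (0 < Φ x) := hx
      exact le_antisymm (not_lt.mp h0) (maxBS_nonneg g N x)
    rw [this, add_zero]
  have hAΦS : ∫ x in A, Φ (S x) ∂P ≤ ∫ x, Φ (S x) ∂P :=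
    setIntegral_le_integral hΦSi (Filter.Eventually.of_forall fun x => maxBS_nonneg g N (S x))
  have hint : ∫ x, Φ (S x) ∂P = ∫ x, Φ x ∂P :=
    integral_comp_mp hS hΦi.aestronglyMeasurable
  have step : ∫ x in A, (Φ x - Φ (S x)) ∂P ≤ ∫ x in A, g x ∂P := by
    apply setIntegral_mono_on (hΦi.integrableOn.sub hΦSi.integrableOn) hg.integrableOn hAm
    exact key
  have split : ∫ x in A, (Φ x - Φ (S x)) ∂P
      = ∫ x in A, Φ x ∂P - ∫ x in A, Φ (S x) ∂P :=
    integral_sub hΦi.integrableOn hΦSi.integrableOn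
  have : (0:ℝ) ≤ ∫ x in A, (Φ x - Φ (S x)) ∂P := by
    rw [split, hAΦ]
    linarith [hAΦS.trans_eq hint]
  linarith

lemma ae_eventually_le (herg : Ergodic S P) {g : Ω → ℝ} (hgm : StronglyMeasurable g)
    (hg : Integrable g P) (hneg : ∫ x, g x ∂P < 0) {δ : ℝ} (hδ : 0 < δ) :
    ∀ᵐ x ∂P, ∀ᶠ n in atTop, birkhoffSum S g n x ≤ δ * n := by
  have hS := herg.toMeasurePreserving
  set B : ℝ → Set Ω := fun c => {x | ∀ N : ℕ, ∃ n, N ≤ n ∧ c * n < birkhoffSum S g n x}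
    with hBdef
  have hBmeas : ∀ c, MeasurableSet (B c) := by
    intro c
    have : B c = ⋂ N : ℕ, ⋃ n : ℕ, ⋃ _ : N ≤ n, {x | c * n < birkhoffSum S g n x} := by
      ext x; simp [hBdef, Set.mem_iInter, Set.mem_iUnion]
    rw [this]
    refine MeasurableSet.iInter fun N => MeasurableSet.iUnion fun n =>
      MeasurableSet.iUnion fun _ => ?_
    exact measurableSet_lt measurable_const
      (stronglyMeasurable_birkhoffSum hS.measurable hgm n).measurable
  have claim1 : ∀ c c' : ℝ, 0 < c' → c' < c → ∀ x, x ∈ B c → S x ∈ B c' := by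
    intro c c' hc' hlt x hx N
    obtain ⟨n₀, hn₀⟩ := exists_nat_ge (g x / (c - c'))
    obtain ⟨n, hn1, hn2⟩ := hx (max (N+1) n₀)
    have hnN : N + 1 ≤ n := le_trans (le_max_left _ _) hn1
    have hnn₀ : (n₀:ℝ) ≤ (n:ℝ) := Nat.cast_le.mpr (le_trans (le_max_right _ _) hn1)
    have hn1' : 1 ≤ n := by omega
    refine ⟨n - 1, by omega, ?_⟩
    have hcast : ((n - 1 : ℕ) : ℝ) = (n:ℝ) - 1 := by
      push_cast [Nat.cast_sub hn1']; ring
    have hcc' : (0:ℝ) < c - c' := sub_pos.mpr hlt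
    have hgx : g x ≤ (c - c') * n := by
      have h1 : g x / (c - c') ≤ (n:ℝ) := le_trans hn₀ hnn₀
      calc g x = g x / (c - c') * (c - c') := by field_simp
        _ ≤ (n:ℝ) * (c - c') := by nlinarith
        _ = (c - c') * n := mul_comm _ _
    have hbs : g x + birkhoffSum S g (n-1) (S x) = birkhoffSum S g n x := by
      have h := birkhoffSum_succ' S g (n-1) x
      rw [Nat.sub_add_cancel hn1'] at h
      linarith [h]
    have hn1R : (1:ℝ) ≤ (n:ℝ) := by exact_mod_cast hn1'
    rw [hcast]
    nlinarith [hn2]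
  have claim2 : ∀ c c' : ℝ, 0 < c' → c' < c → ∀ x, S x ∈ B c → x ∈ B c' := by
    intro c c' hc' hlt x hx N
    have hcc' : (0:ℝ) < c - c' := sub_pos.mpr hlt
    obtain ⟨n₀, hn₀⟩ := exists_nat_ge ((c' - g x) / (c - c'))
    obtain ⟨n, hn1, hn2⟩ := hx (max N n₀)
    have hnn₀ : (n₀:ℝ) ≤ (n:ℝ) := Nat.cast_le.mpr (le_trans (le_max_right _ _) hn1)
    refine ⟨n + 1, by have := le_trans (le_max_left N n₀) hn1; omega, ?_⟩
    have hbs : birkhoffSum S g (n+1) x = g x + birkhoffSum S g n (S x) :=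
      birkhoffSum_succ' S g n x
    have hgx : c' - g x ≤ (c - c') * n := by
      have h1 : (c' - g x) / (c - c') ≤ (n:ℝ) := le_trans hn₀ hnn₀
      calc c' - g x = (c' - g x) / (c - c') * (c - c') := by field_simp
        _ ≤ (n:ℝ) * (c - c') := by nlinarith
        _ = (c - c') * n := mul_comm _ _
    push_cast
    nlinarith [hn2]
  set E : Set Ω := ⋃ (k : ℚ) (_ : 0 < k), B k with hEdef
  have hEmeas : MeasurableSet E :=
    MeasurableSet.iUnion fun k => MeasurableSet.iUnion fun _ => hBmeas k
  have hEinv : S ⁻¹' E = E := by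
    ext x
    simp only [hEdef, Set.mem_preimage, Set.mem_iUnion]
    constructor
    · rintro ⟨k, hk, hxk⟩
      have hk' : (0:ℝ) < (k:ℝ) := by exact_mod_cast hk
      have h2 : x ∈ B ((k:ℝ)/2) :=
        claim2 k ((k:ℝ)/2) (half_pos hk') (half_lt_self hk') x hxk
      exact ⟨k/2, by positivity, by rwa [Rat.cast_div, Rat.cast_ofNat]⟩
    · rintro ⟨k, hk, hxk⟩
      have hk' : (0:ℝ) < (k:ℝ) := by exact_mod_cast hk
      have h2 : S x ∈ B ((k:ℝ)/2) :=
        claim1 k ((k:ℝ)/2) (half_pos hk') (half_lt_self hk') x hxk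
      exact ⟨k/2, by positivity, by rwa [Rat.cast_div, Rat.cast_ofNat]⟩
  rcases herg.ae_empty_or_univ hEmeas hEinv with he | hu
  · -- E almost empty : good case
    obtain ⟨k, hk0, hkδ⟩ := exists_rat_btwn hδ
    have hk0' : (0:ℚ) < k := by exact_mod_cast hk0
    have he' : ∀ᵐ x ∂P, x ∉ E := by
      rw [Filter.eventuallyEq_empty] at he; exact he
    filter_upwards [he'] with x hx
    have hxB : x ∉ B (k:ℝ) := by
      intro hxB
      exact hx (by simp only [hEdef, Set.mem_iUnion]; exact ⟨k, hk0', hxB⟩)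
    simp only [hBdef, Set.mem_setOf_eq, not_forall] at hxB
    obtain ⟨N, hN⟩ := hxB
    push_neg at hN
    rw [eventually_atTop]
    refine ⟨N, fun n hn => ?_⟩
    refine le_trans (hN n hn) ?_
    have : (0:ℝ) ≤ (n:ℝ) := Nat.cast_nonneg n
    nlinarith
  · -- E almost everything : contradiction with maximal ergodic theorem
    exfalso
    have h1 : ∀ᵐ x ∂P, x ∈ E := by
      rw [Filter.eventuallyEq_univ] at hu
      exact Filter.eventually_iff.mpr (by simpa using hu)
    set A : ℕ → Set Ω := fun N => {x | 0 < maxBS S g N x} with hAdef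
    have hAmeas : ∀ N, MeasurableSet (A N) :=
      fun N => measurableSet_lt measurable_const
        (stronglyMeasurable_maxBS hS.measurable hgm N).measurable
    have hAmono : Monotone A := fun N N' h x hx =>
      lt_of_lt_of_le hx (maxBS_mono g h x)
    have hAll : ∀ᵐ x ∂P, x ∈ ⋃ N, A N := by
      filter_upwards [h1] with x hx
      simp only [hEdef, Set.mem_iUnion] at hx
      obtain ⟨k, hk, hxk⟩ := hx
      obtain ⟨n, hn1, hn2⟩ := hxk 1
      have hkn : (0:ℝ) < (k:ℝ) * n := by
        have : (0:ℝ) < (k:ℝ) := by exact_mod_cast hk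
        have hn' : (0:ℝ) < (n:ℝ) := by exact_mod_cast hn1
        positivity
      rw [Set.mem_iUnion]
      exact ⟨n, (pos_maxBS_iff g n x).mpr ⟨n, hn1, le_refl n, lt_trans hkn hn2⟩⟩
    have ht := tendsto_setIntegral_of_monotone hAmeas hAmono hg.integrableOn
    have hunion : ∫ x in ⋃ N, A N, g x ∂P = ∫ x, g x ∂P := by
      have hmem : (⋃ N, A N) ∈ ae P := by
        have h := Filter.eventually_iff.mp hAll
        rwa [Set.setOf_mem_eq] at h
      rw [setIntegral_congr_set (Filter.eventuallyEq_univ.mpr hmem)]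
      exact setIntegral_univ
    have hge : 0 ≤ ∫ x in ⋃ N, A N, g x ∂P :=
      ge_of_tendsto ht (Filter.Eventually.of_forall fun N => maximal_ergodic hS hgm hg N)
    rw [hunion] at hge
    linarith

lemma ae_eventually_avg_le (herg : Ergodic S P) {f : Ω → ℝ} (hfm : StronglyMeasurable f)
    (hf : Integrable f P) {ε : ℝ} (hε : 0 < ε) :
    ∀ᵐ x ∂P, ∀ᶠ n in atTop, birkhoffSum S f n x ≤ (∫ y, f y ∂P + ε) * n := by
  set c := ∫ y, f y ∂P + ε/2 with hc
  set g := fun x => f x - c with hgdef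
  have hgm : StronglyMeasurable g := hfm.sub stronglyMeasurable_const
  have hgInt : Integrable g P := hf.sub (integrable_const c)
  have hneg : ∫ x, g x ∂P < 0 := by
    rw [hgdef]
    rw [integral_sub hf (integrable_const c)]
    simp [hc]
    linarith
  have hbs : ∀ (n : ℕ) (x : Ω), birkhoffSum S g n x = birkhoffSum S f n x - n * c := by
    intro n x
    simp only [birkhoffSum, hgdef]
    rw [Finset.sum_sub_distrib, Finset.sum_const, card_range, nsmul_eq_mul]
  filter_upwards [ae_eventually_le herg hgm hgInt hneg (half_pos hε)] with x hx
  filter_upwards [hx] with n hn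
  rw [hbs] at hn
  have hn0 : (0:ℝ) ≤ (n:ℝ) := Nat.cast_nonneg n
  rw [hc] at hn
  nlinarith

lemma ae_tendsto_birkhoff_sm (herg : Ergodic S P) {f : Ω → ℝ} (hfm : StronglyMeasurable f)
    (hf : Integrable f P) :
    ∀ᵐ x ∂P, Tendsto (fun n : ℕ => (n:ℝ)⁻¹ * birkhoffSum S f n x) atTop
      (𝓝 (∫ y, f y ∂P)) := by
  have hneg : ∀ (h : Ω → ℝ), birkhoffSum S (fun y => -h y) = fun n x => -birkhoffSum S h n x := by
    intro h; funext n x; simp [birkhoffSum]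
  have H : ∀ q : ℚ, ∀ᵐ x ∂P, 0 < (q:ℝ) →
      ((∀ᶠ n in atTop, birkhoffSum S f n x ≤ (∫ y, f y ∂P + q) * n) ∧
       (∀ᶠ n in atTop, (∫ y, f y ∂P - q) * n ≤ birkhoffSum S f n x)) := by
    intro q
    rcases le_or_gt (q:ℝ) 0 with hq | hq
    · filter_upwards with x hx; linarith
    · have h1 := ae_eventually_avg_le herg hfm hf hq
      have h2 := ae_eventually_avg_le herg hfm.neg hf.neg hq
      filter_upwards [h1, h2] with x hx1 hx2 _
      refine ⟨hx1, ?_⟩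
      filter_upwards [hx2] with n hn
      simp only [birkhoffSum, Pi.neg_apply, Finset.sum_neg_distrib, integral_neg] at hn
      simp only [birkhoffSum]
      linarith
  have Hall := (ae_all_iff).mpr H
  filter_upwards [Hall] with x hx
  rw [Metric.tendsto_atTop]
  intro ε hε
  obtain ⟨q, hq0, hqε⟩ := exists_rat_btwn hε
  have hq0' : 0 < (q:ℝ) := hq0
  obtain ⟨hup, hlo⟩ := hx q hq0'
  obtain ⟨N1, hN1⟩ := eventually_atTop.mp hup
  obtain ⟨N2, hN2⟩ := eventually_atTop.mp hlo
  refine ⟨max 1 (max N1 N2), fun n hn => ?_⟩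
  have hn1 : 1 ≤ n := le_trans (le_max_left _ _) hn
  have hnN1 : N1 ≤ n := le_trans (le_max_left _ _) (le_trans (le_max_right _ _) hn)
  have hnN2 : N2 ≤ n := le_trans (le_max_right _ _) (le_trans (le_max_right _ _) hn)
  have hnR : (0:ℝ) < (n:ℝ) := by exact_mod_cast hn1
  have h1 := hN1 n hnN1
  have h2 := hN2 n hnN2
  have hinv : (0:ℝ) ≤ (n:ℝ)⁻¹ := inv_nonneg.mpr hnR.le
  have hu : (n:ℝ)⁻¹ * birkhoffSum S f n x ≤ ∫ y, f y ∂P + q := by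
    calc (n:ℝ)⁻¹ * birkhoffSum S f n x ≤ (n:ℝ)⁻¹ * ((∫ y, f y ∂P + q) * n) :=
          mul_le_mul_of_nonneg_left h1 hinv
      _ = ∫ y, f y ∂P + q := by field_simp
  have hl : ∫ y, f y ∂P - q ≤ (n:ℝ)⁻¹ * birkhoffSum S f n x := by
    calc ∫ y, f y ∂P - q = (n:ℝ)⁻¹ * ((∫ y, f y ∂P - q) * n) := by field_simp
      _ ≤ (n:ℝ)⁻¹ * birkhoffSum S f n x := mul_le_mul_of_nonneg_left h2 hinv
  rw [Real.dist_eq]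
  have habs : |(n:ℝ)⁻¹ * birkhoffSum S f n x - ∫ y, f y ∂P| ≤ q :=
    abs_le.mpr ⟨by linarith, by linarith⟩
  linarith

lemma birkhoffSum_congr_ae (hS : MeasurePreserving S P P) {f f' : Ω → ℝ} (h : f =ᵐ[P] f') :
    ∀ᵐ x ∂P, ∀ n, birkhoffSum S f n x = birkhoffSum S f' n x := by
  have hi : ∀ i : ℕ, ∀ᵐ x ∂P, f (S^[i] x) = f' (S^[i] x) := fun i =>
    (hS.iterate i).quasiMeasurePreserving.ae h
  filter_upwards [ae_all_iff.mpr hi] with x hx n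
  exact Finset.sum_congr rfl fun i _ => hx i

/-- Birkhoff pointwise ergodic theorem. -/
lemma ae_tendsto_birkhoff (herg : Ergodic S P) {f : Ω → ℝ} (hf : Integrable f P) :
    ∀ᵐ x ∂P, Tendsto (fun n : ℕ => (n:ℝ)⁻¹ * birkhoffSum S f n x) atTop
      (𝓝 (∫ y, f y ∂P)) := by
  set f' := hf.1.mk f with hf'def
  have hff' : f =ᵐ[P] f' := hf.1.ae_eq_mk
  have hf'm : StronglyMeasurable f' := hf.1.stronglyMeasurable_mk
  have hf' : Integrable f' P := hf.congr hff'
  have hint : ∫ y, f' y ∂P = ∫ y, f y ∂P := integral_congr_ae hff'.symm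
  filter_upwards [ae_tendsto_birkhoff_sm herg hf'm hf',
    birkhoffSum_congr_ae herg.toMeasurePreserving hff'] with x hx heq
  rw [← hint]
  have h2 : (fun n : ℕ => (n:ℝ)⁻¹ * birkhoffSum S f n x)
      = fun n : ℕ => (n:ℝ)⁻¹ * birkhoffSum S f' n x := funext fun n => by rw [heq n]
  rw [h2]
  exact hx

lemma integral_abs_birkhoffSum_le (hS : MeasurePreserving S P P) {f : Ω → ℝ}
    (hf : Integrable f P) (n : ℕ) :
    ∫ x, |birkhoffSum S f n x| ∂P ≤ n * ∫ x, |f x| ∂P := by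
  have habs : ∀ i : ℕ, Integrable (fun x => |f (S^[i] x)|) P :=
    fun i => (integrable_comp_mp (hS.iterate i) hf).abs
  calc ∫ x, |birkhoffSum S f n x| ∂P
      ≤ ∫ x, ∑ i ∈ range n, |f (S^[i] x)| ∂P := by
        apply integral_mono (integrable_birkhoffSum hS hf n).abs
          (integrable_finset_sum _ fun i _ => habs i)
        intro x
        exact Finset.abs_sum_le_sum_abs _ _
    _ = ∑ i ∈ range n, ∫ x, |f (S^[i] x)| ∂P :=
        integral_finset_sum _ fun i _ => habs i
    _ = ∑ i ∈ range n, ∫ x, |f x| ∂P := Finset.sum_congr rfl fun i _ =>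
        integral_comp_mp (hS.iterate i) hf.abs.aestronglyMeasurable
    _ = n * ∫ x, |f x| ∂P := by rw [Finset.sum_const, card_range, nsmul_eq_mul]

lemma l1_simple (herg : Ergodic S P) (g : SimpleFunc Ω ℝ) :
    Tendsto (fun n : ℕ => ∫ x, |(n:ℝ)⁻¹ * birkhoffSum S (g : Ω → ℝ) n x
      - ∫ y, g y ∂P| ∂P) atTop (𝓝 0) := by
  have hS := herg.toMeasurePreserving
  obtain ⟨C, hC⟩ := g.exists_forall_norm_le
  set D := max C 0 with hD
  have hD0 : 0 ≤ D := le_max_right _ _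
  have hC' : ∀ x, |(g : Ω → ℝ) x| ≤ D := fun x => le_trans (hC x) (le_max_left _ _)
  have hgi : Integrable (g : Ω → ℝ) P :=
    (integrable_const D).mono' g.stronglyMeasurable.aestronglyMeasurable
      (Filter.Eventually.of_forall fun x => by simpa using hC' x)
  have hIg : |∫ y, (g : Ω → ℝ) y ∂P| ≤ D := by
    calc |∫ y, (g : Ω → ℝ) y ∂P| ≤ ∫ y, |(g : Ω → ℝ) y| ∂P := by
          simpa [Real.norm_eq_abs] using norm_integral_le_integral_norm (g : Ω → ℝ) (μ := P)
      _ ≤ ∫ _, D ∂P := integral_mono hgi.abs (integrable_const D)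
            (fun x => hC' x)
      _ = D := by simp
  have havg : ∀ (n : ℕ) (x : Ω), |(n:ℝ)⁻¹ * birkhoffSum S (g : Ω → ℝ) n x| ≤ D := by
    intro n x
    have h1 : |birkhoffSum S (g : Ω → ℝ) n x| ≤ n * D := by
      calc |birkhoffSum S (g : Ω → ℝ) n x| ≤ ∑ i ∈ range n, |(g : Ω → ℝ) (S^[i] x)| :=
            Finset.abs_sum_le_sum_abs _ _
        _ ≤ ∑ _i ∈ range n, D := Finset.sum_le_sum fun i _ => hC' _
        _ = n * D := by rw [Finset.sum_const, card_range, nsmul_eq_mul]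
    rcases Nat.eq_zero_or_pos n with h | h
    · subst h; simpa [birkhoffSum] using hD0
    · have hn : (0:ℝ) < n := by exact_mod_cast h
      rw [abs_mul, abs_inv, Nat.abs_cast]
      calc (n:ℝ)⁻¹ * |birkhoffSum S (g : Ω → ℝ) n x| ≤ (n:ℝ)⁻¹ * ((n:ℝ) * D) :=
            mul_le_mul_of_nonneg_left h1 (inv_nonneg.mpr hn.le)
        _ = D := by field_simp
  have key := tendsto_integral_of_dominated_convergence (μ := P)
    (F := fun (n : ℕ) x => |(n:ℝ)⁻¹ * birkhoffSum S (g : Ω → ℝ) n x - ∫ y, g y ∂P|)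
    (f := fun _ => (0:ℝ)) (fun _ => 2 * D)
    (fun n => (((((stronglyMeasurable_birkhoffSum hS.measurable g.stronglyMeasurable
        n).measurable.const_mul ((n:ℝ)⁻¹)).sub measurable_const).abs)).aestronglyMeasurable)
    (integrable_const _)
    (fun n => Filter.Eventually.of_forall fun x => by
      rw [Real.norm_eq_abs, abs_abs]
      calc |(n:ℝ)⁻¹ * birkhoffSum S (g : Ω → ℝ) n x - ∫ y, g y ∂P|
          ≤ |(n:ℝ)⁻¹ * birkhoffSum S (g : Ω → ℝ) n x| + |∫ y, g y ∂P| := abs_sub _ _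
        _ ≤ 2 * D := by linarith [havg n x, hIg])
    (by
      filter_upwards [ae_tendsto_birkhoff_sm herg g.stronglyMeasurable hgi] with x hx
      have := (hx.sub_const (∫ y, (g : Ω → ℝ) y ∂P)).abs
      simpa using this)
  simpa using key

/-- Birkhoff L¹ ergodic theorem. -/
lemma tendsto_l1_birkhoff (herg : Ergodic S P) {f : Ω → ℝ} (hf : Integrable f P) :
    Tendsto (fun n : ℕ => ∫ x, |(n:ℝ)⁻¹ * birkhoffSum S f n x - ∫ y, f y ∂P| ∂P)
      atTop (𝓝 0) := by
  have hS := herg.toMeasurePreserving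
  rw [Metric.tendsto_atTop]
  intro ε hε
  have hε6 : (0:ℝ) < ε/6 := by positivity
  obtain ⟨g, hg_sub, hg_mem⟩ := (memLp_one_iff_integrable.mpr hf).exists_simpleFunc_eLpNorm_sub_lt
    ENNReal.one_ne_top (show ENNReal.ofReal (ε/6) ≠ 0 by
      simp [ENNReal.ofReal_eq_zero, not_le, hε6])
  have hgi : Integrable (g : Ω → ℝ) P := memLp_one_iff_integrable.mp hg_mem
  have hfg : Integrable (fun x => f x - g x) P := hf.sub hgi
  have hsub : ∫ x, |f x - g x| ∂P ≤ ε/6 := by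
    have h1 : ∫ x, |f x - g x| ∂P = (eLpNorm (f - (g : Ω → ℝ)) 1 P).toReal := by
      rw [eLpNorm_one_eq_lintegral_enorm]
      have := integral_norm_eq_lintegral_enorm (f := fun x => f x - (g : Ω → ℝ) x) (μ := P)
        hfg.aestronglyMeasurable
      simpa [Real.norm_eq_abs, Pi.sub_apply] using this
    rw [h1]
    exact ENNReal.toReal_le_of_le_ofReal hε6.le hg_sub.le
  obtain ⟨N, hN⟩ := Metric.tendsto_atTop.mp (l1_simple herg g) (ε/6) hε6
  refine ⟨max 1 N, fun n hn => ?_⟩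
  have hn1 : 1 ≤ n := le_trans (le_max_left _ _) hn
  have hnN : N ≤ n := le_trans (le_max_right _ _) hn
  have hnR : (0:ℝ) < (n:ℝ) := by exact_mod_cast hn1
  have hinv : (0:ℝ) ≤ (n:ℝ)⁻¹ := inv_nonneg.mpr hnR.le
  -- the three pieces
  set A : Ω → ℝ := fun x => |(n:ℝ)⁻¹ * birkhoffSum S (fun y => f y - g y) n x| with hA
  set B : Ω → ℝ := fun x => |(n:ℝ)⁻¹ * birkhoffSum S (g : Ω → ℝ) n x - ∫ y, g y ∂P| with hB
  set c : ℝ := |∫ y, (g : Ω → ℝ) y ∂P - ∫ y, f y ∂P| with hc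
  have hAi : Integrable A P := (((integrable_birkhoffSum hS hfg n).const_mul _).abs).congr
    (Filter.Eventually.of_forall fun x => rfl)
  have hBi : Integrable B P := ((((integrable_birkhoffSum hS hgi n).const_mul _).sub
    (integrable_const _)).abs).congr (Filter.Eventually.of_forall fun x => rfl)
  have hsplit : ∀ x, (n:ℝ)⁻¹ * birkhoffSum S f n x - ∫ y, f y ∂P
      = (n:ℝ)⁻¹ * birkhoffSum S (fun y => f y - g y) n x
        + ((n:ℝ)⁻¹ * birkhoffSum S (g : Ω → ℝ) n x - ∫ y, g y ∂P)
        + (∫ y, (g : Ω → ℝ) y ∂P - ∫ y, f y ∂P) := by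
    intro x
    have h : birkhoffSum S (fun y => f y - g y) n x + birkhoffSum S (g : Ω → ℝ) n x
        = birkhoffSum S f n x := by
      simp [birkhoffSum, ← Finset.sum_add_distrib]
    have h2 : (n:ℝ)⁻¹ * birkhoffSum S (fun y => f y - g y) n x
        + (n:ℝ)⁻¹ * birkhoffSum S (g : Ω → ℝ) n x = (n:ℝ)⁻¹ * birkhoffSum S f n x := by
      rw [← mul_add, h]
    linarith
  have hpt : ∀ x, |(n:ℝ)⁻¹ * birkhoffSum S f n x - ∫ y, f y ∂P| ≤ A x + B x + c := by
    intro x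
    rw [hsplit x]
    calc |_ + _ + _| ≤ |(n:ℝ)⁻¹ * birkhoffSum S (fun y => f y - g y) n x
          + ((n:ℝ)⁻¹ * birkhoffSum S (g : Ω → ℝ) n x - ∫ y, g y ∂P)| + c :=
          abs_add_le _ _
      _ ≤ A x + B x + c := by
          have := abs_add_le ((n:ℝ)⁻¹ * birkhoffSum S (fun y => f y - g y) n x)
            ((n:ℝ)⁻¹ * birkhoffSum S (g : Ω → ℝ) n x - ∫ y, g y ∂P)
          simp only [hA, hB]
          linarith
  have hImain : Integrable (fun x => |(n:ℝ)⁻¹ * birkhoffSum S f n x - ∫ y, f y ∂P|) P :=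
    ((((integrable_birkhoffSum hS hf n).const_mul _).sub (integrable_const _)).abs).congr
      (Filter.Eventually.of_forall fun x => rfl)
  have hIA : ∫ x, A x ∂P ≤ ε/6 := by
    have h1 : ∫ x, A x ∂P = (n:ℝ)⁻¹ * ∫ x, |birkhoffSum S (fun y => f y - g y) n x| ∂P := by
      rw [← integral_const_mul]
      apply integral_congr_ae
      filter_upwards with x
      simp only [hA, abs_mul, abs_inv, Nat.abs_cast]
    rw [h1]
    calc (n:ℝ)⁻¹ * ∫ x, |birkhoffSum S (fun y => f y - g y) n x| ∂P
        ≤ (n:ℝ)⁻¹ * ((n:ℝ) * ∫ x, |f x - g x| ∂P) :=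
          mul_le_mul_of_nonneg_left (integral_abs_birkhoffSum_le hS hfg n) hinv
      _ = ∫ x, |f x - g x| ∂P := by field_simp
      _ ≤ ε/6 := hsub
  have hIB : ∫ x, B x ∂P < ε/6 := by
    have h := hN n hnN
    have hnn : 0 ≤ ∫ x, B x ∂P := integral_nonneg fun x => abs_nonneg _
    rw [Real.dist_eq, sub_zero, abs_of_nonneg (by simpa [hB] using hnn)] at h
    simpa [hB] using h
  have hIc : c ≤ ε/6 := by
    rw [hc]
    calc |∫ y, (g : Ω → ℝ) y ∂P - ∫ y, f y ∂P| = |∫ y, ((g : Ω → ℝ) y - f y) ∂P| := by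
          rw [integral_sub hgi hf]
      _ ≤ ∫ y, |(g : Ω → ℝ) y - f y| ∂P := by
          simpa [Real.norm_eq_abs] using
            norm_integral_le_integral_norm (fun y => (g : Ω → ℝ) y - f y) (μ := P)
      _ = ∫ y, |f y - g y| ∂P := by
          apply integral_congr_ae
          filter_upwards with y
          rw [abs_sub_comm]
      _ ≤ ε/6 := hsub
  have hchain : ∫ x, |(n:ℝ)⁻¹ * birkhoffSum S f n x - ∫ y, f y ∂P| ∂P
      ≤ ∫ x, A x ∂P + ∫ x, B x ∂P + c := by
    calc ∫ x, |(n:ℝ)⁻¹ * birkhoffSum S f n x - ∫ y, f y ∂P| ∂P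
        ≤ ∫ x, (A x + B x + c) ∂P :=
          integral_mono hImain ((hAi.add hBi).add (integrable_const c)) hpt
      _ = ∫ x, A x ∂P + ∫ x, B x ∂P + c := by
          have hABi : Integrable (fun x => A x + B x) P := hAi.add hBi
          rw [integral_add hABi (integrable_const c), integral_add hAi hBi]
          simp
  have hnn : 0 ≤ ∫ x, |(n:ℝ)⁻¹ * birkhoffSum S f n x - ∫ y, f y ∂P| ∂P :=
    integral_nonneg fun x => abs_nonneg _
  rw [Real.dist_eq, sub_zero, abs_of_nonneg hnn]
  calc ∫ x, |(n:ℝ)⁻¹ * birkhoffSum S f n x - ∫ y, f y ∂P| ∂P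
      ≤ ∫ x, A x ∂P + ∫ x, B x ∂P + c := hchain
    _ < ε/6 + ε/6 + ε/6 := by linarith
    _ < ε := by linarith
end Birkhoff

section Helpers
variable {M : Type*} {G : Type*} [AddCancelCommMonoid G]

lemma window_sum (τ : M → M) (q : ℕ) (hq : τ^[q] = id) (a : M → G) (t : M) (i : ℕ) :
    ∑ j ∈ range q, a (τ^[i + j] t) = ∑ j ∈ range q, a (τ^[j] t) := by
  induction i with
  | zero => simp
  | succ i ih =>
    have hper : ∀ m : ℕ, a (τ^[m + q] t) = a (τ^[m] t) := by
      intro m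
      rw [Function.iterate_add_apply, hq]
      simp
    have h1 : ∑ j ∈ range (q+1), a (τ^[i + j] t)
        = ∑ j ∈ range q, a (τ^[i + (j+1)] t) + a (τ^[i + 0] t) :=
      Finset.sum_range_succ' (fun j => a (τ^[i + j] t)) q
    have h2 : ∑ j ∈ range (q+1), a (τ^[i + j] t)
        = ∑ j ∈ range q, a (τ^[i + j] t) + a (τ^[i + q] t) :=
      Finset.sum_range_succ (fun j => a (τ^[i + j] t)) q
    have h3 : ∑ j ∈ range q, a (τ^[i + 1 + j] t) = ∑ j ∈ range q, a (τ^[i + (j+1)] t) :=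
      Finset.sum_congr rfl fun j _ => by rw [show i + 1 + j = i + (j+1) by omega]
    have h4 : a (τ^[i + q] t) = a (τ^[i + 0] t) := by
      rw [show i + q = i + 0 + q by omega, hper]
    rw [h3, ← ih]
    have := h1.symm.trans h2
    rw [h4] at this
    exact add_right_cancel this

lemma ratio_div_tendsto (q : ℕ) (hq0 : 0 < q) :
    Tendsto (fun n : ℕ => ((n / q : ℕ) : ℝ) / n) atTop (𝓝 ((q:ℝ)⁻¹)) := by
  have hqR : (0:ℝ) < q := by exact_mod_cast hq0
  have hlow : Tendsto (fun n : ℕ => (q:ℝ)⁻¹ - (n:ℝ)⁻¹) atTop (𝓝 ((q:ℝ)⁻¹)) := by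
    simpa using (tendsto_const_nhds (x := (q:ℝ)⁻¹) (f := atTop)).sub
      tendsto_inv_atTop_nhds_zero_nat
  refine tendsto_of_tendsto_of_tendsto_of_le_of_le' hlow
    (tendsto_const_nhds (x := (q:ℝ)⁻¹)) ?_ ?_
  · filter_upwards [eventually_ge_atTop 1] with n hn
    have hnR : (0:ℝ) < n := by exact_mod_cast hn
    have hlt : n < (n / q) * q + q := by
      rw [Nat.mul_comm]
      have h := Nat.div_add_mod n q
      have h2 := Nat.mod_lt n hq0
      omega
    have hltR : (n:ℝ) < ((n/q : ℕ):ℝ) * q + q := by exact_mod_cast hlt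
    have e1 : (q:ℝ)⁻¹ - (n:ℝ)⁻¹ = ((n:ℝ) - q)/(q*n) := by field_simp
    have e2 : ((n/q:ℕ):ℝ)/n = (((n/q:ℕ):ℝ)*q)/(q*n) := by
      rw [div_eq_div_iff (ne_of_gt hnR) (by positivity)]; ring
    rw [e1, e2]
    gcongr
    linarith
  · filter_upwards [eventually_ge_atTop 1] with n hn
    have hnR : (0:ℝ) < n := by exact_mod_cast hn
    have hle : (n / q) * q ≤ n := Nat.div_mul_le_self n q
    have hleR : ((n/q : ℕ):ℝ) * q ≤ n := by exact_mod_cast hle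
    have e2 : ((n/q:ℕ):ℝ)/n = (((n/q:ℕ):ℝ)*q)/(q*n) := by
      rw [div_eq_div_iff (ne_of_gt hnR) (by positivity)]; ring
    have e3 : (q:ℝ)⁻¹ = (n:ℝ)/(q*n) := by field_simp
    rw [e2, e3]
    gcongr

lemma nat_div_tendsto (q : ℕ) (hq0 : 0 < q) :
    Tendsto (fun n : ℕ => n / q) atTop atTop := by
  apply tendsto_atTop_atTop.mpr
  intro b
  exact ⟨b * q, fun n hn => (Nat.le_div_iff_mul_le hq0).mpr hn⟩
end Helpers


/-- if `τ` is periodic with period `q` and `θ_{κ_q(t)}` is ergodic for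
μ-a.e. `t`, then for μ-a.e. `t` the skew product averages of `F ∈ L¹(μ ⊗ P)` converge,
`P`-a.s. and in `L¹(P)`, to the constant `(1/q) ∑_{ν<q} ∫ F(τ^[ν] t, ω) dP(ω)`. -/
theorem skew_product_periodic_ergodic_theorem
    {M Ω : Type*} [MeasurableSpace M] [MeasurableSpace Ω] {d : ℕ}
    (μ : Measure M) (P : Measure Ω) [IsProbabilityMeasure μ] [IsProbabilityMeasure P]
    (θ : (Fin d → ℕ) → Ω → Ω)
    (hθ0 : θ 0 = id)
    (hθadd : ∀ k l : Fin d → ℕ, θ k ∘ θ l = θ (k + l))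
    (hθmeas : ∀ k, Measurable (θ k))
    (hθmp : ∀ k, MeasurePreserving (θ k) P P)
    (τ : M → M) (hτ : MeasurePreserving τ μ μ)
    (q : ℕ) (hq0 : 0 < q) (hq : τ^[q] = id)
    (κ : M → Fin d → ℕ) (hκ : Measurable κ)
    (herg : ∀ᵐ t ∂μ, Ergodic (θ (∑ i ∈ Finset.range q, κ (τ^[i] t))) P)
    (F : M × Ω → ℝ) (hF : Integrable F (μ.prod P)) :
    ∀ᵐ t ∂μ,
      (∀ᵐ ω ∂P,
        Tendsto (fun n : ℕ => (n : ℝ)⁻¹ * ∑ i ∈ Finset.range n,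
            F (τ^[i] t, θ (∑ j ∈ Finset.range i, κ (τ^[j] t)) ω)) atTop
          (nhds ((q : ℝ)⁻¹ * ∑ ν ∈ Finset.range q, ∫ ω, F (τ^[ν] t, ω) ∂P))) ∧
      Tendsto (fun n : ℕ => ∫ ω, |(n : ℝ)⁻¹ * ∑ i ∈ Finset.range n,
          F (τ^[i] t, θ (∑ j ∈ Finset.range i, κ (τ^[j] t)) ω)
            - (q : ℝ)⁻¹ * ∑ ν ∈ Finset.range q, ∫ ω', F (τ^[ν] t, ω') ∂P| ∂P) atTop
        (nhds 0) := by
  have hslice : ∀ᵐ t ∂μ, ∀ i : ℕ, Integrable (fun ω => F (τ^[i] t, ω)) P := by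
    rw [ae_all_iff]
    intro i
    exact (hτ.iterate i).quasiMeasurePreserving.ae hF.prod_right_ae
  filter_upwards [herg, hslice] with t hergt hslicet
  -- abbreviations (kept as plain defs to match the goal syntactically)
  set k : ℕ → Fin d → ℕ := fun i => ∑ j ∈ Finset.range i, κ (τ^[j] t) with hkdef
  set K : Fin d → ℕ := ∑ i ∈ Finset.range q, κ (τ^[i] t) with hKdef
  set St : Ω → Ω := θ K with hSt
  have hergS : Ergodic St P := hergt
  have hSmp : MeasurePreserving St P P := hθmp K
  have htermInt : ∀ i : ℕ, Integrable (fun ω => F (τ^[i] t, θ (k i) ω)) P := fun i =>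
    ((hθmp (k i)).integrable_comp (hslicet i).aestronglyMeasurable).mpr (hslicet i)
  have htermIntegral : ∀ i : ℕ,
      ∫ ω, F (τ^[i] t, θ (k i) ω) ∂P = ∫ ω, F (τ^[i] t, ω) ∂P := fun i =>
    integral_comp_mp (hθmp (k i)) (hslicet i).aestronglyMeasurable
  set G : Ω → ℝ := fun ω => ∑ r ∈ Finset.range q, F (τ^[r] t, θ (k r) ω) with hGdef
  set H : Ω → ℝ := fun ω => ∑ r ∈ Finset.range q, |F (τ^[r] t, θ (k r) ω)| with hHdef
  have hGInt : Integrable G P := integrable_finset_sum _ fun r _ => htermInt r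
  have hHInt : Integrable H P := integrable_finset_sum _ fun r _ => (htermInt r).abs
  set c : ℝ := ∑ ν ∈ Finset.range q, ∫ ω, F (τ^[ν] t, ω) ∂P with hcdef
  have hGint_eq : ∫ ω, G ω ∂P = c := by
    rw [hGdef, hcdef]
    rw [integral_finset_sum _ fun r _ => htermInt r]
    exact Finset.sum_congr rfl fun r _ => htermIntegral r
  have hH0 : ∀ ω, 0 ≤ H ω := fun ω => Finset.sum_nonneg fun r _ => abs_nonneg _
  -- periodicity
  have hiter_eq : ∀ i : ℕ, τ^[i + q] t = τ^[i] t := by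
    intro i
    rw [Function.iterate_add_apply, hq]
    simp
  have hk_add : ∀ i : ℕ, k (i + q) = k i + K := by
    intro i
    rw [hkdef, hKdef]
    simp only
    rw [Finset.sum_range_add]
    congr 1
    exact window_sum τ q hq κ t i
  have key : ∀ (i : ℕ) (ω : Ω),
      F (τ^[i + q] t, θ (k (i + q)) ω) = F (τ^[i] t, θ (k i) (St ω)) := by
    intro i ω
    rw [hiter_eq i, hk_add i, ← hθadd (k i) K]
    rfl
  have iter : ∀ (m i : ℕ) (ω : Ω),
      F (τ^[i + m * q] t, θ (k (i + m * q)) ω) = F (τ^[i] t, θ (k i) (St^[m] ω)) := by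
    intro m
    induction m with
    | zero => intro i ω; simp
    | succ m ih =>
      intro i ω
      rw [show i + (m + 1) * q = (i + m * q) + q by ring, key (i + m * q) ω, ih i (St ω),
        ← Function.iterate_succ_apply]
  have sum_eq : ∀ (n : ℕ) (ω : Ω),
      ∑ i ∈ Finset.range (n * q), F (τ^[i] t, θ (k i) ω) = birkhoffSum St G n ω := by
    intro n
    induction n with
    | zero => intro ω; simp [birkhoffSum]
    | succ n ih =>
      intro ω
      rw [show (n + 1) * q = n * q + q by ring, Finset.sum_range_add, ih ω,
        birkhoffSum_succ]
      congr 1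
      rw [hGdef]
      refine Finset.sum_congr rfl fun j _ => ?_
      have := iter n j ω
      rw [show j + n * q = n * q + j by ring] at this
      exact this
  -- tail bound
  have tail : ∀ (n : ℕ) (ω : Ω),
      |∑ i ∈ Finset.range n, F (τ^[i] t, θ (k i) ω) - birkhoffSum St G (n / q) ω|
        ≤ H (St^[n / q] ω) := by
    intro n ω
    have hsplit : ∑ i ∈ Finset.range n, F (τ^[i] t, θ (k i) ω)
        = birkhoffSum St G (n / q) ω
          + ∑ j ∈ Finset.range (n % q), F (τ^[j] t, θ (k j) (St^[n / q] ω)) := by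
      conv_lhs => rw [← Nat.div_add_mod' n q]
      rw [Finset.sum_range_add, sum_eq (n / q) ω]
      congr 1
      refine Finset.sum_congr rfl fun j _ => ?_
      have h := iter (n / q) j ω
      rw [show j + n / q * q = n / q * q + j by ring] at h
      exact h
    rw [hsplit]
    rw [add_sub_cancel_left]
    calc |∑ j ∈ Finset.range (n % q), F (τ^[j] t, θ (k j) (St^[n / q] ω))|
        ≤ ∑ j ∈ Finset.range (n % q), |F (τ^[j] t, θ (k j) (St^[n / q] ω))| :=
          Finset.abs_sum_le_sum_abs _ _
      _ ≤ ∑ j ∈ Finset.range q, |F (τ^[j] t, θ (k j) (St^[n / q] ω))| :=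
          Finset.sum_le_sum_of_subset_of_nonneg
            (Finset.range_subset_range.mpr (Nat.mod_lt n hq0).le)
            (fun j _ _ => abs_nonneg _)
      _ = H (St^[n / q] ω) := rfl
  have hmq := nat_div_tendsto q hq0
  have hratio := ratio_div_tendsto q hq0
  constructor
  · -- pointwise statement
    filter_upwards [ae_tendsto_birkhoff hergS hGInt, ae_tendsto_birkhoff hergS hHInt]
      with ω hωG hωH
    rw [hGint_eq] at hωG
    -- (1/m) H(St^[m] ω) → 0
    have hd : Tendsto (fun m : ℕ => (m:ℝ)⁻¹ * H (St^[m] ω)) atTop (𝓝 0) := by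
      have h1 : Tendsto (fun m : ℕ => ((m:ℝ)+1)/(m:ℝ)) atTop (𝓝 1) := by
        have h0 := (tendsto_const_nhds (x := (1:ℝ)) (f := (atTop : Filter ℕ))).add
          tendsto_inv_atTop_nhds_zero_nat
        rw [add_zero] at h0
        apply h0.congr'
        filter_upwards [eventually_ge_atTop 1] with m hm
        have hmR : (0:ℝ) < m := by exact_mod_cast hm
        field_simp
      have h3 := hωH.comp (tendsto_add_atTop_nat 1)
      have h4 := h1.mul h3
      rw [one_mul] at h4
      have h2 : Tendsto (fun m : ℕ => (m:ℝ)⁻¹ * birkhoffSum St H (m+1) ω) atTop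
          (𝓝 (∫ y, H y ∂P)) := by
        apply h4.congr'
        filter_upwards [eventually_ge_atTop 1] with m hm
        have hmR : (0:ℝ) < m := by exact_mod_cast hm
        have hm1R : (0:ℝ) < (m:ℝ)+1 := by positivity
        show ((m:ℝ)+1)/(m:ℝ) * ((((m+1:ℕ)):ℝ)⁻¹ * birkhoffSum St H (m+1) ω)
          = (m:ℝ)⁻¹ * birkhoffSum St H (m+1) ω
        push_cast
        field_simp
      have h5 := h2.sub hωH
      rw [sub_self] at h5
      apply h5.congr
      intro m
      rw [birkhoffSum_succ]
      ring
    -- n⁻¹ * BS G (n/q) → q⁻¹ c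
    have hX : Tendsto (fun n : ℕ => (n:ℝ)⁻¹ * birkhoffSum St G (n/q) ω) atTop
        (𝓝 ((q:ℝ)⁻¹ * c)) := by
      have h6 := hratio.mul (hωG.comp hmq)
      apply h6.congr
      intro n
      show ((n/q : ℕ):ℝ)/(n:ℝ) * (((n/q : ℕ):ℝ)⁻¹ * birkhoffSum St G (n/q) ω)
        = (n:ℝ)⁻¹ * birkhoffSum St G (n/q) ω
      rcases Nat.eq_zero_or_pos (n/q) with h | h
      · rw [h]; simp [birkhoffSum_zero]
      · have hn0 : 0 < n := by
          rcases Nat.eq_zero_or_pos n with h' | h'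
          · subst h'; simp at h
          · exact h'
        have hmR : (0:ℝ) < ((n/q : ℕ):ℝ) := by exact_mod_cast h
        have hnR : (0:ℝ) < (n:ℝ) := by exact_mod_cast hn0
        field_simp
    -- (1/n) H(St^[n/q] ω) → 0
    have hv : Tendsto (fun n : ℕ => (n:ℝ)⁻¹ * H (St^[n/q] ω)) atTop (𝓝 0) := by
      apply squeeze_zero' (g := fun n : ℕ => ((n/q : ℕ):ℝ)⁻¹ * H (St^[n/q] ω))
      · filter_upwards with n
        have : (0:ℝ) ≤ (n:ℝ)⁻¹ := by positivity
        exact mul_nonneg this (hH0 _)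
      · filter_upwards [eventually_ge_atTop q] with n hn
        refine mul_le_mul_of_nonneg_right ?_ (hH0 _)
        have hm1 : 1 ≤ n / q := (Nat.one_le_div_iff hq0).mpr hn
        have h1 : (0:ℝ) < ((n/q:ℕ):ℝ) := by exact_mod_cast hm1
        refine inv_anti₀ h1 ?_
        exact_mod_cast Nat.div_le_self n q
      · exact hd.comp hmq
    -- combine
    rw [tendsto_iff_norm_sub_tendsto_zero]
    apply squeeze_zero' (g := fun n : ℕ =>
      ‖(n:ℝ)⁻¹ * birkhoffSum St G (n/q) ω - (q:ℝ)⁻¹ * c‖ + (n:ℝ)⁻¹ * H (St^[n/q] ω))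
    · filter_upwards with n; exact norm_nonneg _
    · filter_upwards with n
      rw [Real.norm_eq_abs, Real.norm_eq_abs]
      have hinv : (0:ℝ) ≤ (n:ℝ)⁻¹ := by positivity
      have hdec : (n:ℝ)⁻¹ * (∑ i ∈ Finset.range n, F (τ^[i] t, θ (k i) ω)) - (q:ℝ)⁻¹ * c
          = ((n:ℝ)⁻¹ * birkhoffSum St G (n/q) ω - (q:ℝ)⁻¹ * c)
            + (n:ℝ)⁻¹ * ((∑ i ∈ Finset.range n, F (τ^[i] t, θ (k i) ω))
              - birkhoffSum St G (n/q) ω) := by ring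
      rw [hdec]
      calc |_ + _| ≤ |(n:ℝ)⁻¹ * birkhoffSum St G (n/q) ω - (q:ℝ)⁻¹ * c|
            + |(n:ℝ)⁻¹ * ((∑ i ∈ Finset.range n, F (τ^[i] t, θ (k i) ω))
              - birkhoffSum St G (n/q) ω)| := abs_add_le _ _
        _ ≤ _ := by
            refine add_le_add (le_refl _) ?_
            rw [abs_mul, abs_inv, Nat.abs_cast]
            exact mul_le_mul_of_nonneg_left (tail n ω) hinv
    · have := (tendsto_iff_norm_sub_tendsto_zero.mp hX).add hv
      simpa using this
  · -- L¹ statement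
    have hJ := tendsto_l1_birkhoff hergS hGInt
    rw [hGint_eq] at hJ
    have hHcomp : ∀ m : ℕ, ∫ ω, H (St^[m] ω) ∂P = ∫ ω, H ω ∂P := fun m =>
      integral_comp_mp (hSmp.iterate m) hHInt.aestronglyMeasurable
    apply squeeze_zero' (g := fun n : ℕ =>
      ((n/q : ℕ):ℝ)/(n:ℝ) * ∫ ω, |((n/q : ℕ):ℝ)⁻¹ * birkhoffSum St G (n/q) ω - c| ∂P
      + |((n/q : ℕ):ℝ)/(n:ℝ) - (q:ℝ)⁻¹| * |c| + (n:ℝ)⁻¹ * ∫ ω, H ω ∂P)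
    · filter_upwards with n
      exact integral_nonneg fun ω => abs_nonneg _
    · filter_upwards [eventually_ge_atTop q] with n hn
      set m := n / q with hmdef
      have hm1 : 1 ≤ m := (Nat.one_le_div_iff hq0).mpr hn
      have hn1 : 1 ≤ n := le_trans hq0 hn
      have hmR : (0:ℝ) < (m:ℝ) := by exact_mod_cast hm1
      have hnR : (0:ℝ) < (n:ℝ) := by exact_mod_cast hn1
      have hrat0 : (0:ℝ) ≤ ((m:ℕ):ℝ)/(n:ℝ) := by positivity
      -- integrability of pieces
      have hI0 : Integrable (fun ω => (n:ℝ)⁻¹ *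
          (∑ i ∈ Finset.range n, F (τ^[i] t, θ (k i) ω)) - (q:ℝ)⁻¹ * c) P :=
        ((integrable_finset_sum _ fun i _ => htermInt i).const_mul _).sub (integrable_const _)
      have hIaG : Integrable (fun ω => (m:ℝ)⁻¹ * birkhoffSum St G m ω - c) P :=
        ((integrable_birkhoffSum hSmp hGInt m).const_mul _).sub (integrable_const _)
      have hIH : Integrable (fun ω => H (St^[m] ω)) P :=
        (hSmp.iterate m).integrable_comp hHInt.aestronglyMeasurable |>.mpr hHInt
      -- pointwise bound
      have hpt : ∀ ω, |(n:ℝ)⁻¹ * (∑ i ∈ Finset.range n, F (τ^[i] t, θ (k i) ω))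
            - (q:ℝ)⁻¹ * c|
          ≤ ((m:ℕ):ℝ)/(n:ℝ) * |(m:ℝ)⁻¹ * birkhoffSum St G m ω - c|
            + |((m:ℕ):ℝ)/(n:ℝ) - (q:ℝ)⁻¹| * |c|
            + (n:ℝ)⁻¹ * H (St^[m] ω) := by
        intro ω
        have hid : (n:ℝ)⁻¹ * (∑ i ∈ Finset.range n, F (τ^[i] t, θ (k i) ω)) - (q:ℝ)⁻¹ * c
            = ((m:ℕ):ℝ)/(n:ℝ) * ((m:ℝ)⁻¹ * birkhoffSum St G m ω - c)
              + (((m:ℕ):ℝ)/(n:ℝ) - (q:ℝ)⁻¹) * c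
              + (n:ℝ)⁻¹ * ((∑ i ∈ Finset.range n, F (τ^[i] t, θ (k i) ω))
                - birkhoffSum St G m ω) := by
          have hbs : ((m:ℕ):ℝ)/(n:ℝ) * ((m:ℝ)⁻¹ * birkhoffSum St G m ω)
              = (n:ℝ)⁻¹ * birkhoffSum St G m ω := by
            field_simp
          nlinarith [hbs]
        rw [hid]
        have hinvn : (0:ℝ) ≤ (n:ℝ)⁻¹ := by positivity
        calc |_ + _ + _|
            ≤ |((m:ℕ):ℝ)/(n:ℝ) * ((m:ℝ)⁻¹ * birkhoffSum St G m ω - c)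
                + (((m:ℕ):ℝ)/(n:ℝ) - (q:ℝ)⁻¹) * c|
              + |(n:ℝ)⁻¹ * ((∑ i ∈ Finset.range n, F (τ^[i] t, θ (k i) ω))
                - birkhoffSum St G m ω)| := abs_add_le _ _
          _ ≤ (|((m:ℕ):ℝ)/(n:ℝ) * ((m:ℝ)⁻¹ * birkhoffSum St G m ω - c)|
                + |(((m:ℕ):ℝ)/(n:ℝ) - (q:ℝ)⁻¹) * c|)
              + |(n:ℝ)⁻¹ * ((∑ i ∈ Finset.range n, F (τ^[i] t, θ (k i) ω))
                - birkhoffSum St G m ω)| := by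
              exact add_le_add (abs_add_le _ _) (le_refl _)
          _ ≤ _ := by
              rw [abs_mul, abs_mul, abs_mul, abs_inv, Nat.abs_cast,
                abs_of_nonneg hrat0]
              refine add_le_add (add_le_add (le_refl _) (le_refl _)) ?_
              exact mul_le_mul_of_nonneg_left (tail n ω) hinvn
      -- integrate the bound
      calc ∫ ω, |(n:ℝ)⁻¹ * (∑ i ∈ Finset.range n, F (τ^[i] t, θ (k i) ω))
              - (q:ℝ)⁻¹ * c| ∂P
          ≤ ∫ ω, (((m:ℕ):ℝ)/(n:ℝ) * |(m:ℝ)⁻¹ * birkhoffSum St G m ω - c|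
              + |((m:ℕ):ℝ)/(n:ℝ) - (q:ℝ)⁻¹| * |c|
              + (n:ℝ)⁻¹ * H (St^[m] ω)) ∂P := by
            refine integral_mono hI0.abs ?_ hpt
            exact ((hIaG.abs.const_mul _).add (integrable_const _)).add (hIH.const_mul _)
        _ = ((m:ℕ):ℝ)/(n:ℝ) * ∫ ω, |(m:ℝ)⁻¹ * birkhoffSum St G m ω - c| ∂P
              + |((m:ℕ):ℝ)/(n:ℝ) - (q:ℝ)⁻¹| * |c| + (n:ℝ)⁻¹ * ∫ ω, H ω ∂P := by
            have hsum1 : Integrable (fun ω => ((m:ℕ):ℝ)/(n:ℝ)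
                * |(m:ℝ)⁻¹ * birkhoffSum St G m ω - c|
                + |((m:ℕ):ℝ)/(n:ℝ) - (q:ℝ)⁻¹| * |c|) P :=
              (hIaG.abs.const_mul _).add (integrable_const _)
            have hsum2 : Integrable (fun ω => ((m:ℕ):ℝ)/(n:ℝ)
                * |(m:ℝ)⁻¹ * birkhoffSum St G m ω - c|) P := hIaG.abs.const_mul _
            rw [integral_add hsum1 (hIH.const_mul _)]
            rw [integral_add hsum2 (integrable_const _)]
            rw [integral_const_mul, integral_const_mul, integral_const_mul,
              integral_const, hHcomp m]
            simp
    · have hb1 := hratio.mul (hJ.comp hmq)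
      rw [mul_zero] at hb1
      have hb2 := ((hratio.sub (tendsto_const_nhds (x := (q:ℝ)⁻¹))).abs).mul_const |c|
      rw [sub_self, abs_zero, zero_mul] at hb2
      have hb3 := tendsto_inv_atTop_nhds_zero_nat.mul_const (∫ ω, H ω ∂P)
      rw [zero_mul] at hb3
      have := (hb1.add hb2).add hb3
      simpa using this
end

section
/- Let a < b be reals, μ a Borel probability measure on [a,b] absolutely continuous with respect to Lebesgue measure with continuous density, and τ: [a,b] → [a,b] continuous. Suppose that for every continuous f on [a,b], (1/n)Σ_{i=0}^{n-1} f∘τ^i converges uniformly to ∫ f dμ. Then the same uniform convergence holds for every Riemann-integrable function f on [a,b]. -/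
open MeasureTheory Filter Finset

/-- Lebesgue measure on the subtype `[a,b]`. -/
noncomputable def lebesgueIcc (a b : ℝ) : Measure (Set.Icc a b) :=
  (volume : Measure ℝ).comap Subtype.val

/-- A function on `[a,b]` is Riemann-integrable iff it is bounded and its set of
discontinuities is Lebesgue-null. -/
def RiemannIntegrableOn {a b : ℝ} (f : Set.Icc a b → ℝ) : Prop :=
  (∃ C : ℝ, ∀ x, |f x| ≤ C) ∧ lebesgueIcc a b {x | ¬ ContinuousAt f x} = 0

/-- Key approximation lemma: a bounded, a.e.-continuous function can be dominated
from above by a continuous function whose integral is arbitrarily close.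
The continuous function is obtained as a Lipschitz sup-convolution. -/
lemma aux_exists_cont_ge {X : Type*} [MetricSpace X] [Nonempty X]
    [MeasurableSpace X] [BorelSpace X]
    (μ : Measure X) [IsFiniteMeasure μ]
    (f : X → ℝ) (C : ℝ) (hC : ∀ x, |f x| ≤ C)
    (hD : μ {x | ¬ ContinuousAt f x} = 0)
    (ε : ℝ) (hε : 0 < ε) :
    ∃ h : X → ℝ, Continuous h ∧ (∀ x, f x ≤ h x) ∧ ∫ x, h x ∂μ < ∫ x, f x ∂μ + ε := by
  set h : ℕ → X → ℝ := fun n x => ⨆ y, (f y - n * dist x y) with hh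
  have bdd : ∀ (n : ℕ) (x : X), BddAbove (Set.range fun y => f y - n * dist x y) := by
    intro n x
    refine ⟨C, ?_⟩
    rintro _ ⟨y, rfl⟩
    have h1 := (abs_le.1 (hC y)).2
    have h2 : (0:ℝ) ≤ (n:ℝ) * dist x y := by positivity
    simpa using by linarith
  have hfle : ∀ n x, f x ≤ h n x := by
    intro n x
    have := le_ciSup (bdd n x) x
    simpa [hh] using this
  have hleC : ∀ n x, h n x ≤ C := by
    intro n x
    apply ciSup_le
    intro y
    have h1 := (abs_le.1 (hC y)).2
    have h2 : (0:ℝ) ≤ (n:ℝ) * dist x y := by positivity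
    linarith
  have hgeC : ∀ n x, -C ≤ h n x := fun n x =>
    le_trans (abs_le.1 (hC x)).1 (hfle n x)
  have key : ∀ (n : ℕ) (x x' : X), h n x ≤ h n x' + n * dist x x' := by
    intro n x x'
    apply ciSup_le
    intro y
    have tri : dist x' y ≤ dist x' x + dist x y := dist_triangle _ _ _
    have hn : (0:ℝ) ≤ (n:ℝ) := Nat.cast_nonneg n
    have h1 : f y - n * dist x y ≤ (f y - n * dist x' y) + n * dist x x' := by
      have : (n:ℝ) * dist x' y ≤ n * dist x' x + n * dist x y := by nlinarith
      rw [dist_comm x' x] at this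
      linarith
    exact h1.trans (add_le_add_left (le_ciSup (bdd n x') y) _)
  have hcont : ∀ n : ℕ, Continuous (h n) := by
    intro n
    apply LipschitzWith.continuous (K := n)
    apply LipschitzWith.of_dist_le_mul
    intro x x'
    rw [Real.dist_eq, abs_sub_le_iff]
    constructor
    · have := key n x x'
      simp only [NNReal.coe_natCast]
      linarith
    · have := key n x' x
      rw [dist_comm x' x] at this
      simp only [NNReal.coe_natCast]
      linarith
  have hanti : ∀ x, Antitone (fun n => h n x) := by
    intro x m n hmn
    apply ciSup_le
    intro y
    have : f y - (n:ℝ) * dist x y ≤ f y - (m:ℝ) * dist x y := by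
      have : (m:ℝ) * dist x y ≤ (n:ℝ) * dist x y :=
        mul_le_mul_of_nonneg_right (Nat.cast_le.2 hmn) dist_nonneg
      linarith
    exact this.trans (le_ciSup (bdd m x) y)
  set L : X → ℝ := fun x => ⨅ n : ℕ, h n x with hL
  have bddB : ∀ x, BddBelow (Set.range fun n : ℕ => h n x) := by
    intro x
    exact ⟨f x, by rintro _ ⟨n, rfl⟩; exact hfle n x⟩
  have hLge : ∀ x, f x ≤ L x := fun x => le_ciInf (fun n => hfle n x)
  have htend : ∀ x, Tendsto (fun n => h n x) atTop (nhds (L x)) := by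
    intro x
    exact tendsto_atTop_ciInf (hanti x) (bddB x)
  -- at continuity points of `f`, the envelope `L` equals `f`
  have hLeq : ∀ x, ContinuousAt f x → L x = f x := by
    intro x hx
    refine le_antisymm ?_ (hLge x)
    apply le_of_forall_pos_le_add
    intro δ hδ
    obtain ⟨r, hr, hrr⟩ := Metric.continuousAt_iff.1 hx δ hδ
    obtain ⟨n, hn⟩ := exists_nat_ge ((2 * C + |f x|) / r)
    have hrn : (2 * C + |f x|) ≤ n * r := by
      rw [div_le_iff₀ hr] at hn
      linarith
    have : L x ≤ h n x := ciInf_le (bddB x) n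
    refine this.trans ?_
    apply ciSup_le
    intro y
    rcases lt_or_ge (dist y x) r with hy | hy
    · have := hrr hy
      rw [Real.dist_eq] at this
      have := (abs_lt.1 this).2
      have hd : (0:ℝ) ≤ (n:ℝ) * dist x y := by positivity
      linarith
    · have h1 := (abs_le.1 (hC y)).2
      have h2 := (abs_le.1 (hC x)).1
      have h3 : (n:ℝ) * r ≤ (n:ℝ) * dist x y := by
        rw [dist_comm]
        exact mul_le_mul_of_nonneg_left hy (Nat.cast_nonneg n)
      have h4 : - |f x| ≤ f x := neg_abs_le _
      nlinarith
  have haeL : L =ᵐ[μ] f := by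
    have hae : ∀ᵐ x ∂μ, ContinuousAt f x := by
      rw [ae_iff]; exact hD
    filter_upwards [hae] with x hx
    exact hLeq x hx
  have hLint : ∫ x, L x ∂μ = ∫ x, f x ∂μ := integral_congr_ae haeL
  have htendInt : Tendsto (fun n => ∫ x, h n x ∂μ) atTop (nhds (∫ x, L x ∂μ)) := by
    apply tendsto_integral_of_dominated_convergence (fun _ => C)
    · exact fun n => (hcont n).aestronglyMeasurable
    · exact integrable_const C
    · intro n
      filter_upwards with x
      rw [Real.norm_eq_abs, abs_le]
      exact ⟨hgeC n x, hleC n x⟩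
    · filter_upwards with x
      exact htend x
  rw [hLint] at htendInt
  obtain ⟨n, hn⟩ := (htendInt.eventually_lt_const (lt_add_of_pos_right _ hε)).exists
  exact ⟨h n, hcont n, hfle n, hn⟩

/-- if the ergodic averages of every continuous function converge
uniformly to its `μ`-integral, where `μ` is absolutely continuous with continuous
density, then the same holds for every Riemann-integrable function. -/
theorem uniform_convergence_riemann
    (a b : ℝ) (hab : a < b)
    (μ : Measure (Set.Icc a b)) [IsProbabilityMeasure μ]
    (ρ : Set.Icc a b → ℝ) (hρ : Continuous ρ)
    (hμ : μ = (lebesgueIcc a b).withDensity (fun x => ENNReal.ofReal (ρ x)))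
    (τ : Set.Icc a b → Set.Icc a b) (hτ : Continuous τ)
    (hcont : ∀ f : Set.Icc a b → ℝ, Continuous f →
      TendstoUniformly
        (fun (n : ℕ) (t : Set.Icc a b) => (n : ℝ)⁻¹ * ∑ i ∈ Finset.range n, f (τ^[i] t))
        (fun _ => ∫ x, f x ∂μ) atTop) :
    ∀ f : Set.Icc a b → ℝ, RiemannIntegrableOn f →
      TendstoUniformly
        (fun (n : ℕ) (t : Set.Icc a b) => (n : ℝ)⁻¹ * ∑ i ∈ Finset.range n, f (τ^[i] t))
        (fun _ => ∫ x, f x ∂μ) atTop := by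
  intro f hf
  obtain ⟨⟨C, hC⟩, hnull⟩ := hf
  haveI : Nonempty (Set.Icc a b) := ⟨⟨a, le_refl a, hab.le⟩⟩
  have hμD : μ {x | ¬ ContinuousAt f x} = 0 := by
    rw [hμ]
    exact (withDensity_absolutelyContinuous _ _) hnull
  rw [Metric.tendstoUniformly_iff]
  intro ε hε
  have hε3 : 0 < ε / 3 := by linarith
  -- upper approximation
  obtain ⟨h, hhc, hfh, hhint⟩ := aux_exists_cont_ge μ f C hC hμD (ε/3) hε3
  -- lower approximation via `-f`
  have hμD' : μ {x | ¬ ContinuousAt (fun y => -f y) x} = 0 := by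
    have : {x | ¬ ContinuousAt (fun y => -f y) x} = {x | ¬ ContinuousAt f x} := by
      ext x
      simp only [Set.mem_setOf_eq, not_iff_not]
      constructor
      · intro hx; have hx2 : ContinuousAt (fun y => - -f y) x := hx.neg; simpa only [neg_neg] using hx2
      · intro hx; exact hx.neg
    rw [this]; exact hμD
  obtain ⟨g', hg'c, hfg', hg'int⟩ := aux_exists_cont_ge μ (fun y => -f y) C
    (fun x => by simpa using hC x) hμD' (ε/3) hε3
  set g : Set.Icc a b → ℝ := fun x => -g' x with hg
  have hgc : Continuous g := hg'c.neg
  have hgf : ∀ x, g x ≤ f x := fun x => by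
    have := hfg' x; simp only [hg]; linarith
  have hgint : ∫ x, f x ∂μ - ε/3 < ∫ x, g x ∂μ := by
    have hneg : ∫ x, g x ∂μ = - ∫ x, g' x ∂μ := by
      rw [hg]; exact integral_neg g'
    have hneg2 : ∫ x, (fun y => -f y) x ∂μ = - ∫ x, f x ∂μ := integral_neg f
    rw [hneg2] at hg'int
    rw [hneg]
    linarith
  -- uniform convergence for `g` and `h`, then squeeze
  have Hh := hcont h hhc
  have Hg := hcont g hgc
  rw [Metric.tendstoUniformly_iff] at Hh Hg
  filter_upwards [Hh (ε/3) hε3, Hg (ε/3) hε3] with n hn1 hn2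
  intro t
  have hAle : (n : ℝ)⁻¹ * ∑ i ∈ Finset.range n, f (τ^[i] t)
      ≤ (n : ℝ)⁻¹ * ∑ i ∈ Finset.range n, h (τ^[i] t) := by
    apply mul_le_mul_of_nonneg_left
    · exact Finset.sum_le_sum fun i _ => hfh _
    · positivity
  have hAge : (n : ℝ)⁻¹ * ∑ i ∈ Finset.range n, g (τ^[i] t)
      ≤ (n : ℝ)⁻¹ * ∑ i ∈ Finset.range n, f (τ^[i] t) := by
    apply mul_le_mul_of_nonneg_left
    · exact Finset.sum_le_sum fun i _ => hgf _
    · positivity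
  have h1 := hn1 t
  have h2 := hn2 t
  rw [Real.dist_eq, abs_sub_lt_iff] at h1 h2 ⊢
  constructor
  · have := h2.1
    linarith
  · have := h1.2
    linarith
end
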